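/- arXiv:hep-th/9304156 — 9 statements merged into one kernel-verified Lean document; each statement's English description precedes it below -/
import Mathlib

section
/- Let h : ℝ² → GLₙ(ℂ) have twice continuously differentiable entries and let X₊, X₋ be fixed n×n complex matrices. Define the connection components A₊ = h⁻¹ * ∂₊h + X₊ and A₋ = h⁻¹ * X₋ * h. Then the curvature F = ∂₊A₋ − ∂₋A₊ + [A₊, A₋] vanishes identically if and only if h satisfies the Toda equation ∂₋(h⁻¹ * ∂₊h) = [X₊, h⁻¹ * X₋ * h]. -/
open Matrix

section aux
variable {n : ℕ}

/-- Entrywise derivative of a matrix-valued function of one real variable. -/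
noncomputable def MD (g : ℝ → Matrix (Fin n) (Fin n) ℂ) (t : ℝ) :
    Matrix (Fin n) (Fin n) ℂ :=
  Matrix.of fun i j => deriv (fun s => g s i j) t

/-- Entrywise differentiability. -/
def MDiff (g : ℝ → Matrix (Fin n) (Fin n) ℂ) (t : ℝ) : Prop :=
  ∀ i j, DifferentiableAt ℝ (fun s => g s i j) t

lemma MDiff.det {g : ℝ → Matrix (Fin n) (Fin n) ℂ} {t : ℝ} (hg : MDiff g t) :
    DifferentiableAt ℝ (fun s => (g s).det) t := by
  have : (fun s => (g s).det)
      = fun s => ∑ σ : Equiv.Perm (Fin n),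
          ((Equiv.Perm.sign σ : ℤ) : ℂ) * ∏ i, g s (σ i) i := by
    funext s; rw [Matrix.det_apply']
  rw [this]
  exact DifferentiableAt.fun_sum fun σ _ =>
    ((DifferentiableAt.fun_finsetProd (u := Finset.univ)
      (f := fun i s => g s (σ i) i) fun i _ => hg (σ i) i)).const_mul _

lemma MDiff.inv {g : ℝ → Matrix (Fin n) (Fin n) ℂ} {t : ℝ} (hg : MDiff g t)
    (hu : IsUnit (g t)) : MDiff (fun s => (g s)⁻¹) t := by
  intro i j
  have hdet : (g t).det ≠ 0 := by
    have := (Matrix.isUnit_iff_isUnit_det _).mp hu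
    exact IsUnit.ne_zero this
  have : (fun s => (g s)⁻¹ i j)
      = fun s => ((g s).det)⁻¹ * ((g s).updateRow j (Pi.single i 1)).det := by
    funext s
    rw [Matrix.inv_def]
    simp [Matrix.smul_apply, smul_eq_mul, Ring.inverse_eq_inv', Matrix.adjugate_apply]
  rw [this]
  refine DifferentiableAt.mul (hg.det.inv hdet) ?_
  refine MDiff.det ?_
  intro i' j'
  by_cases hij : i' = j
  · simp [Matrix.updateRow_apply, hij]
  · simp only [Matrix.updateRow_apply, hij, if_false]
    exact hg i' j'

lemma MDiff.matmul {f g : ℝ → Matrix (Fin n) (Fin n) ℂ} {t : ℝ}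
    (hf : MDiff f t) (hg : MDiff g t) : MDiff (fun s => f s * g s) t := by
  intro i j
  have : (fun s => (f s * g s) i j) = fun s => ∑ k, f s i k * g s k j := by
    funext s; rw [Matrix.mul_apply]
  rw [this]
  exact DifferentiableAt.fun_sum fun k _ => (hf i k).mul (hg k j)

lemma MD_matmul {f g : ℝ → Matrix (Fin n) (Fin n) ℂ} {t : ℝ}
    (hf : MDiff f t) (hg : MDiff g t) :
    MD (fun s => f s * g s) t = MD f t * g t + f t * MD g t := by
  ext i j
  simp only [MD, Matrix.of_apply, Matrix.add_apply, Matrix.mul_apply]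
  rw [deriv_fun_sum (A := fun k s => f s i k * g s k j) fun k _ => (hf i k).mul (hg k j)]
  rw [← Finset.sum_add_distrib]
  refine Finset.sum_congr rfl fun k _ => ?_
  rw [deriv_fun_mul (hf i k) (hg k j)]

lemma MD_const (X : Matrix (Fin n) (Fin n) ℂ) (t : ℝ) :
    MD (fun _ => X) t = 0 := by
  ext i j; simp [MD]

lemma MD_inv {g : ℝ → Matrix (Fin n) (Fin n) ℂ} {t : ℝ} (hg : MDiff g t)
    (hu : ∀ s, IsUnit (g s)) :
    MD (fun s => (g s)⁻¹) t = -((g t)⁻¹ * MD g t * (g t)⁻¹) := by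
  have hdet : ∀ s, IsUnit (g s).det := fun s => (Matrix.isUnit_iff_isUnit_det _).mp (hu s)
  have h1 : (fun s => (g s)⁻¹ * g s) = fun _ => (1 : Matrix (Fin n) (Fin n) ℂ) := by
    funext s; exact Matrix.nonsing_inv_mul _ (hdet s)
  have h2 : MD (fun s => (g s)⁻¹ * g s) t = 0 := by rw [h1]; exact MD_const 1 t
  rw [MD_matmul (hg.inv (hu t)) hg] at h2
  have h3 : MD (fun s => (g s)⁻¹) t * g t = -((g t)⁻¹ * MD g t) := by
    have := eq_neg_of_add_eq_zero_left h2
    exact this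
  calc MD (fun s => (g s)⁻¹) t
      = MD (fun s => (g s)⁻¹) t * (g t * (g t)⁻¹) := by
        rw [Matrix.mul_nonsing_inv _ (hdet t), mul_one]
    _ = (MD (fun s => (g s)⁻¹) t * g t) * (g t)⁻¹ := by rw [mul_assoc]
    _ = -((g t)⁻¹ * MD g t * (g t)⁻¹) := by rw [h3]; noncomm_ring

lemma MD_conj {g : ℝ → Matrix (Fin n) (Fin n) ℂ} {t : ℝ} (X : Matrix (Fin n) (Fin n) ℂ)
    (hg : MDiff g t) (hu : ∀ s, IsUnit (g s)) :
    MD (fun s => (g s)⁻¹ * X * g s) t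
      = ((g t)⁻¹ * X * g t) * ((g t)⁻¹ * MD g t)
        - ((g t)⁻¹ * MD g t) * ((g t)⁻¹ * X * g t) := by
  have hdet : ∀ s, IsUnit (g s).det := fun s => (Matrix.isUnit_iff_isUnit_det _).mp (hu s)
  have hinvd : MDiff (fun s => (g s)⁻¹) t := hg.inv (hu t)
  have hiX : MDiff (fun s => (g s)⁻¹ * X) t := by
    have : (fun s => (g s)⁻¹ * X) = fun s => (g s)⁻¹ * (fun _ => X) s := rfl
    rw [this]; exact hinvd.matmul (fun i j => differentiableAt_const _)
  have e1 : MD (fun s => (g s)⁻¹ * X * g s) t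
      = MD (fun s => (g s)⁻¹ * X) t * g t + ((g t)⁻¹ * X) * MD g t :=
    MD_matmul hiX hg
  have e2 : MD (fun s => (g s)⁻¹ * X) t = MD (fun s => (g s)⁻¹) t * X := by
    have := MD_matmul (f := fun s => (g s)⁻¹) (g := fun _ => X) hinvd
      (fun i j => differentiableAt_const _)
    rw [MD_const, mul_zero, add_zero] at this
    exact this
  rw [e1, e2, MD_inv hg hu]
  have hgg : g t * (g t)⁻¹ = 1 := Matrix.mul_nonsing_inv _ (hdet t)
  have key : ((g t)⁻¹ * X * g t) * ((g t)⁻¹ * MD g t) = (g t)⁻¹ * X * MD g t := by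
    calc ((g t)⁻¹ * X * g t) * ((g t)⁻¹ * MD g t)
        = (g t)⁻¹ * X * (g t * (g t)⁻¹) * MD g t := by noncomm_ring
      _ = (g t)⁻¹ * X * MD g t := by rw [hgg, mul_one]
  rw [key]
  noncomm_ring


/-- Light-cone partial derivative `∂₊` (in the first coordinate), taken entrywise,
of a matrix-valued map on `ℝ²`. -/
noncomputable def dplus {n : ℕ} (h : ℝ × ℝ → Matrix (Fin n) (Fin n) ℂ) :
    ℝ × ℝ → Matrix (Fin n) (Fin n) ℂ :=
  fun p => Matrix.of fun i j => deriv (fun s => h (s, p.2) i j) p.1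

/-- Light-cone partial derivative `∂₋` (in the second coordinate), taken entrywise,
of a matrix-valued map on `ℝ²`. -/
noncomputable def dminus {n : ℕ} (h : ℝ × ℝ → Matrix (Fin n) (Fin n) ℂ) :
    ℝ × ℝ → Matrix (Fin n) (Fin n) ℂ :=
  fun p => Matrix.of fun i j => deriv (fun s => h (p.1, s) i j) p.2

/-- For `A₊ = h⁻¹∂₊h + X₊` and `A₋ = h⁻¹X₋h`, the curvature
`F = ∂₊A₋ − ∂₋A₊ + [A₊, A₋]` vanishes identically iff `h` satisfies the Toda equation
`∂₋(h⁻¹∂₊h) = [X₊, h⁻¹X₋h]`. -/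
theorem statement0 {n : ℕ} (hn : 0 < n)
    (h : ℝ × ℝ → Matrix (Fin n) (Fin n) ℂ)
    (Xp Xm : Matrix (Fin n) (Fin n) ℂ)
    (hC2 : ∀ i j, ContDiff ℝ 2 fun p : ℝ × ℝ => h p i j)
    (hinv : ∀ p, IsUnit (h p)) :
    (∀ p : ℝ × ℝ,
        dplus (fun q => (h q)⁻¹ * Xm * h q) p
          - dminus (fun q => (h q)⁻¹ * dplus h q + Xp) p
          + (((h p)⁻¹ * dplus h p + Xp) * ((h p)⁻¹ * Xm * h p)
            - ((h p)⁻¹ * Xm * h p) * ((h p)⁻¹ * dplus h p + Xp)) = 0)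
      ↔ (∀ p : ℝ × ℝ,
          dminus (fun q => (h q)⁻¹ * dplus h q) p
            = Xp * ((h p)⁻¹ * Xm * h p) - (h p)⁻¹ * Xm * h p * Xp) := by
  have key : ∀ p : ℝ × ℝ,
      dplus (fun q => (h q)⁻¹ * Xm * h q) p
        - dminus (fun q => (h q)⁻¹ * dplus h q + Xp) p
        + (((h p)⁻¹ * dplus h p + Xp) * ((h p)⁻¹ * Xm * h p)
          - ((h p)⁻¹ * Xm * h p) * ((h p)⁻¹ * dplus h p + Xp))
      = (Xp * ((h p)⁻¹ * Xm * h p) - (h p)⁻¹ * Xm * h p * Xp)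
        - dminus (fun q => (h q)⁻¹ * dplus h q) p := by
    intro p
    have hgdiff : MDiff (fun s => h (s, p.2)) p.1 := by
      intro i j
      have : (fun s => h (s, p.2) i j)
          = (fun q : ℝ × ℝ => h q i j) ∘ (fun s : ℝ => (s, p.2)) := rfl
      rw [this]
      exact DifferentiableAt.comp _
        ((hC2 i j).differentiable (by norm_num)).differentiableAt
        (differentiableAt_id.prodMk (differentiableAt_const _))
    have hgu : ∀ s : ℝ, IsUnit (h (s, p.2)) := fun s => hinv (s, p.2)
    have e1 : dplus (fun q => (h q)⁻¹ * Xm * h q) p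
        = MD (fun s : ℝ => (h (s, p.2))⁻¹ * Xm * h (s, p.2)) p.1 := rfl
    have e3 : dminus (fun q => (h q)⁻¹ * dplus h q + Xp) p
        = dminus (fun q => (h q)⁻¹ * dplus h q) p := by
      ext i j
      simp only [dminus, Matrix.of_apply, Matrix.add_apply]
      exact deriv_add_const _
    rw [e1, e3, MD_conj Xm hgdiff hgu,
      show MD (fun s => h (s, p.2)) p.1 = dplus h p from rfl]
    simp only [Prod.mk.eta]
    noncomm_ring
  constructor
  · intro H p
    have h0 : (Xp * ((h p)⁻¹ * Xm * h p) - (h p)⁻¹ * Xm * h p * Xp)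
        - dminus (fun q => (h q)⁻¹ * dplus h q) p = 0 := by
      rw [← key p]; exact H p
    exact (sub_eq_zero.mp h0).symm
  · intro H p
    rw [key p, H p, sub_self]
end aux
end

section
/- Let h : ℝ² → GLₙ(ℂ) have twice continuously differentiable entries and let X₊, X₋ be fixed n×n complex matrices. Define the connection components A₊ = h * X₊ * h⁻¹ and A₋ = −(∂₋h) * h⁻¹ + X₋. Then the curvature F = ∂₊A₋ − ∂₋A₊ + [A₊, A₋] vanishes identically if and only if h satisfies ∂₊((∂₋h) * h⁻¹) = [h * X₊ * h⁻¹, X₋]. -/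
attribute [local instance] Matrix.linftyOpNormedRing Matrix.linftyOpNormedAlgebra

variable {n : ℕ}

local instance : CompleteSpace (Matrix (Fin n) (Fin n) ℂ) :=
  FiniteDimensional.complete ℝ _

/-- Entry evaluation as a continuous linear map. -/
noncomputable def entryCLM (i j : Fin n) : Matrix (Fin n) (Fin n) ℂ →L[ℝ] ℂ :=
  LinearMap.toContinuousLinearMap
    { toFun := fun A => A i j
      map_add' := fun _ _ => rfl
      map_smul' := fun _ _ => rfl }

theorem deriv_entry {f : ℝ → Matrix (Fin n) (Fin n) ℂ} {D : Matrix (Fin n) (Fin n) ℂ} {x : ℝ}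
    (hf : HasDerivAt f D x) (i j : Fin n) :
    deriv (fun s => f s i j) x = D i j := by
  have h2 := ((entryCLM i j).hasFDerivAt.comp_hasDerivAt x hf)
  exact h2.deriv

theorem hasDerivAt_of_entries {f : ℝ → Matrix (Fin n) (Fin n) ℂ} {x : ℝ}
    (hf : ∀ i j, DifferentiableAt ℝ (fun s => f s i j) x) :
    HasDerivAt f (Matrix.of fun i j => deriv (fun s => f s i j) x) x := by
  have key : HasDerivAt
      (fun t => ∑ i : Fin n, ∑ j : Fin n, f t i j • Matrix.single i j (1 : ℂ))
      (∑ i : Fin n, ∑ j : Fin n,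
        deriv (fun s => f s i j) x • Matrix.single i j (1 : ℂ)) x := by
    apply HasDerivAt.fun_sum
    intro i _
    apply HasDerivAt.fun_sum
    intro j _
    exact ((hf i j).hasDerivAt).smul_const _
  have e1 : ∀ A : Matrix (Fin n) (Fin n) ℂ,
      A = ∑ i : Fin n, ∑ j : Fin n, A i j • Matrix.single i j (1 : ℂ) := by
    intro A
    conv_lhs => rw [Matrix.matrix_eq_sum_single A]
    simp [Matrix.smul_single]
  have hfun : (fun t => ∑ i : Fin n, ∑ j : Fin n, f t i j • Matrix.single i j (1 : ℂ))
      = f := by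
    funext t; exact (e1 (f t)).symm
  rw [hfun] at key
  rw [e1 (Matrix.of fun i j => deriv (fun s => f s i j) x)]
  exact key

theorem dminus_eq {f : ℝ × ℝ → Matrix (Fin n) (Fin n) ℂ} {p : ℝ × ℝ}
    {V : Matrix (Fin n) (Fin n) ℂ}
    (hf : HasDerivAt (fun s => f (p.1, s)) V p.2) :
    dminus f p = V := by
  ext i j
  exact deriv_entry hf i j

theorem dplus_neg_add_const (f : ℝ × ℝ → Matrix (Fin n) (Fin n) ℂ)
    (C : Matrix (Fin n) (Fin n) ℂ) (p : ℝ × ℝ) :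
    dplus (fun q => -(f q) + C) p = -(dplus f p) := by
  ext i j
  simp only [dplus, Matrix.of_apply, Matrix.neg_apply, Matrix.add_apply,
    deriv_add_const, deriv.fun_neg]


/-- For `A₊ = h X₊ h⁻¹` and `A₋ = −(∂₋h) h⁻¹ + X₋`, the curvature
`F = ∂₊A₋ − ∂₋A₊ + [A₊, A₋]` vanishes identically iff
`∂₊((∂₋h) h⁻¹) = [h X₊ h⁻¹, X₋]`. -/
theorem statement1 {n : ℕ} (hn : 0 < n)
    (h : ℝ × ℝ → Matrix (Fin n) (Fin n) ℂ)
    (Xp Xm : Matrix (Fin n) (Fin n) ℂ)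
    (hC2 : ∀ i j, ContDiff ℝ 2 fun p : ℝ × ℝ => h p i j)
    (hinv : ∀ p, IsUnit (h p)) :
    (∀ p : ℝ × ℝ,
        dplus (fun q => -(dminus h q * (h q)⁻¹) + Xm) p
          - dminus (fun q => h q * Xp * (h q)⁻¹) p
          + ((h p * Xp * (h p)⁻¹) * (-(dminus h p * (h p)⁻¹) + Xm)
            - (-(dminus h p * (h p)⁻¹) + Xm) * (h p * Xp * (h p)⁻¹)) = 0)
      ↔ (∀ p : ℝ × ℝ,
          dplus (fun q => dminus h q * (h q)⁻¹) p
            = (h p * Xp * (h p)⁻¹) * Xm - Xm * (h p * Xp * (h p)⁻¹)) := by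

  classical
  have key : ∀ p : ℝ × ℝ,
      dplus (fun q => -(dminus h q * (h q)⁻¹) + Xm) p
        - dminus (fun q => h q * Xp * (h q)⁻¹) p
        + ((h p * Xp * (h p)⁻¹) * (-(dminus h p * (h p)⁻¹) + Xm)
          - (-(dminus h p * (h p)⁻¹) + Xm) * (h p * Xp * (h p)⁻¹))
      = -(dplus (fun q => dminus h q * (h q)⁻¹) p)
        + ((h p * Xp * (h p)⁻¹) * Xm - Xm * (h p * Xp * (h p)⁻¹)) := by
    intro p
    have hgdiff : ∀ i j : Fin n, DifferentiableAt ℝ (fun s => h (p.1, s) i j) p.2 := by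
      intro i j
      have hd := ((hC2 i j).differentiable two_ne_zero).comp
        ((differentiable_const p.1).prodMk differentiable_id)
      exact hd.differentiableAt
    have hg : HasDerivAt (fun s => h (p.1, s)) (dminus h p) p.2 :=
      hasDerivAt_of_entries hgdiff
    have hu : ((hinv p).unit : Matrix (Fin n) (Fin n) ℂ) = h p := (hinv p).unit_spec
    have h3 : (((hinv p).unit⁻¹ : (Matrix (Fin n) (Fin n) ℂ)ˣ) : Matrix (Fin n) (Fin n) ℂ)
        = (h p)⁻¹ := by
      rw [Matrix.coe_units_inv, hu]
    have hginv : HasDerivAt (fun s => (h (p.1, s))⁻¹)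
        (-((h p)⁻¹ * dminus h p * (h p)⁻¹)) p.2 := by
      have h1 : HasFDerivAt Ring.inverse
          (-(ContinuousLinearMap.mulLeftRight ℝ (Matrix (Fin n) (Fin n) ℂ)
            ↑(hinv p).unit⁻¹ ↑(hinv p).unit⁻¹)) (h p) := by
        have h0 := hasFDerivAt_ringInverse (𝕜 := ℝ) (hinv p).unit
        rwa [hu] at h0
      have h2 := h1.comp_hasDerivAt p.2 hg
      have hfun : (fun s => (h (p.1, s))⁻¹)
          = fun s => Ring.inverse (h (p.1, s)) := by
        funext s; rw [Matrix.nonsing_inv_eq_ringInverse]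
      rw [hfun]
      refine h2.congr_deriv ?_
      simp [ContinuousLinearMap.mulLeftRight_apply, h3]
    have hprod := (hg.mul_const Xp).mul hginv
    have hdm : dminus (fun q => h q * Xp * (h q)⁻¹) p
        = dminus h p * Xp * (h p)⁻¹
          + (h p * Xp) * (-((h p)⁻¹ * dminus h p * (h p)⁻¹)) := dminus_eq hprod
    have hdet : IsUnit (h p).det := (Matrix.isUnit_iff_isUnit_det _).mp (hinv p)
    have e2 : (h p)⁻¹ * h p = 1 := Matrix.nonsing_inv_mul _ hdet
    have e3 : (dminus h p * (h p)⁻¹) * (h p * Xp * (h p)⁻¹)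
        = dminus h p * Xp * (h p)⁻¹ := by
      simp only [← mul_assoc]
      rw [mul_assoc (dminus h p) (h p)⁻¹ (h p), e2, mul_one]
    have e4 : (h p * Xp) * ((h p)⁻¹ * dminus h p * (h p)⁻¹)
        = (h p * Xp * (h p)⁻¹) * (dminus h p * (h p)⁻¹) := by
      simp only [← mul_assoc]
    rw [dplus_neg_add_const (fun q => dminus h q * (h q)⁻¹) Xm p, hdm, mul_neg, e4, ← e3]
    noncomm_ring
  constructor
  · intro H p
    have hp := H p
    rw [key p, neg_add_eq_zero] at hp
    exact hp
  · intro H p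
    rw [key p, neg_add_eq_zero]
    exact H p
end

section
/- Let u : ℝ² → GLₙ(ℂ) have continuously differentiable entries, let X₊, X₋ be fixed n×n complex matrices, and set h = u². Then the gauge transformation by u of the connection components A₊ = u⁻¹ * ∂₊u + u * X₊ * u⁻¹, A₋ = −(∂₋u) * u⁻¹ + u⁻¹ * X₋ * u, namely A_± ↦ u * A_± * u⁻¹ − (∂_±u) * u⁻¹, yields exactly the components A₊' = h * X₊ * h⁻¹ and A₋' = −(∂₋h) * h⁻¹ + X₋. -/
/-- Gauge transforming the connection `A₊ = u⁻¹∂₊u + uX₊u⁻¹`, `A₋ = −(∂₋u)u⁻¹ + u⁻¹X₋u`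
by `u` (i.e. `A_± ↦ u A_± u⁻¹ − (∂_±u)u⁻¹`) yields `A₊' = hX₊h⁻¹`,
`A₋' = −(∂₋h)h⁻¹ + X₋`, where `h = u²`. -/
theorem statement2 {n : ℕ} (hn : 0 < n)
    (u : ℝ × ℝ → Matrix (Fin n) (Fin n) ℂ)
    (Xp Xm : Matrix (Fin n) (Fin n) ℂ)
    (hC1 : ∀ i j, ContDiff ℝ 1 fun p : ℝ × ℝ => u p i j)
    (hinv : ∀ p, IsUnit (u p))
    (h : ℝ × ℝ → Matrix (Fin n) (Fin n) ℂ)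
    (hdef : ∀ p, h p = u p * u p) :
    ∀ p : ℝ × ℝ,
      (u p * ((u p)⁻¹ * dplus u p + u p * Xp * (u p)⁻¹) * (u p)⁻¹
          - dplus u p * (u p)⁻¹ = h p * Xp * (h p)⁻¹)
      ∧ (u p * (-(dminus u p * (u p)⁻¹) + (u p)⁻¹ * Xm * u p) * (u p)⁻¹
          - dminus u p * (u p)⁻¹ = -(dminus h p * (h p)⁻¹) + Xm) := by
  intro p
  have hud : IsUnit (u p).det := (Matrix.isUnit_iff_isUnit_det _).1 (hinv p)
  have hUV : u p * (u p)⁻¹ = 1 := Matrix.mul_nonsing_inv _ hud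
  have h1 : ∀ M : Matrix (Fin n) (Fin n) ℂ, M * u p * (u p)⁻¹ = M := fun M => by
    rw [mul_assoc, hUV, mul_one]
  have hinvh : (h p)⁻¹ = (u p)⁻¹ * (u p)⁻¹ := by rw [hdef, Matrix.mul_inv_rev]
  constructor
  · rw [hinvh, hdef p]
    simp only [mul_add, add_mul, ← mul_assoc, hUV, one_mul, h1]
    abel
  · have hdm : ∀ (i j : Fin n) (s : ℝ), DifferentiableAt ℝ (fun t => u (p.1, t) i j) s := by
      intro i j s
      exact (((hC1 i j).differentiable one_ne_zero).comp
        ((differentiable_const _).prodMk differentiable_id)).differentiableAt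
    have hD : dminus h p = dminus u p * u p + u p * dminus u p := by
      ext i j
      have he : (fun s => h (p.1, s) i j) =
          fun s => ∑ k, u (p.1, s) i k * u (p.1, s) k j := by
        funext s; rw [hdef]; rfl
      simp only [dminus, Matrix.of_apply, Matrix.add_apply, Matrix.mul_apply, he]
      rw [deriv_fun_sum (A := fun k t => u (p.1, t) i k * u (p.1, t) k j) (fun k _ => ((hdm i k _).mul (hdm k j _)))]
      simp only [deriv_fun_mul (hdm _ _ _) (hdm _ _ _)]
      rw [← Finset.sum_add_distrib]
    rw [hD, hinvh]
    simp only [mul_add, add_mul, mul_neg, neg_mul, neg_add, mul_one, one_mul,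
      ← mul_assoc, hUV, h1]
    abel
end

section
/- Let u : ℝ² → GLₙ(ℂ) have continuously differentiable entries, let X₊, X₋ be fixed n×n complex matrices, and set h = u². Then the gauge transformation by u⁻¹ of the connection components A₊ = u⁻¹ * ∂₊u + u * X₊ * u⁻¹, A₋ = −(∂₋u) * u⁻¹ + u⁻¹ * X₋ * u, namely A_± ↦ u⁻¹ * A_± * u − (∂_±(u⁻¹)) * u, yields exactly the components A₊' = h⁻¹ * ∂₊h + X₊ and A₋' = h⁻¹ * X₋ * h. -/
noncomputable def mderiv {n : ℕ} (A : ℝ → Matrix (Fin n) (Fin n) ℂ) (t : ℝ) :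
    Matrix (Fin n) (Fin n) ℂ :=
  Matrix.of fun i j => deriv (fun s => A s i j) t

lemma diff_det {n : ℕ} {A : ℝ → Matrix (Fin n) (Fin n) ℂ} {t : ℝ}
    (hA : ∀ i j, DifferentiableAt ℝ (fun s => A s i j) t) :
    DifferentiableAt ℝ (fun s => (A s).det) t := by
  have : (fun s => (A s).det)
      = fun s => ∑ σ : Equiv.Perm (Fin n),
          ((Equiv.Perm.sign σ : ℤ) : ℂ) * ∏ i, A s (σ i) i := by
    funext s
    simp [Matrix.det_apply, Units.smul_def, zsmul_eq_mul]
  rw [this]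
  exact DifferentiableAt.fun_sum fun σ _ =>
    (DifferentiableAt.fun_finset_prod fun i _ => hA (σ i) i).const_mul _

lemma diff_inv_entry {n : ℕ} {A : ℝ → Matrix (Fin n) (Fin n) ℂ} {t : ℝ}
    (hA : ∀ i j, DifferentiableAt ℝ (fun s => A s i j) t)
    (hu : IsUnit (A t)) (i j : Fin n) :
    DifferentiableAt ℝ (fun s => (A s)⁻¹ i j) t := by
  have hdet : (A t).det ≠ 0 := by
    have := (Matrix.isUnit_iff_isUnit_det _).1 hu
    exact IsUnit.ne_zero this
  have hrw : (fun s => (A s)⁻¹ i j)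
      = fun s => ((A s).det)⁻¹ * (A s).adjugate i j := by
    funext s
    rw [Matrix.inv_def, Matrix.smul_apply, Ring.inverse_eq_inv, smul_eq_mul]
  rw [hrw]
  have hadj : DifferentiableAt ℝ (fun s => (A s).adjugate i j) t := by
    have : (fun s => (A s).adjugate i j)
        = fun s => ((A s).updateRow j (Pi.single i 1)).det := by
      funext s; rw [Matrix.adjugate_apply]
    rw [this]
    refine diff_det fun k l => ?_
    by_cases hk : k = j
    · subst hk; simpa [Matrix.updateRow_apply] using differentiableAt_const _
    · simpa [Matrix.updateRow_apply, hk] using hA k l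
  exact ((diff_det hA).inv hdet).mul hadj

lemma mderiv_mul {n : ℕ} {A B : ℝ → Matrix (Fin n) (Fin n) ℂ} {t : ℝ}
    (hA : ∀ i j, DifferentiableAt ℝ (fun s => A s i j) t)
    (hB : ∀ i j, DifferentiableAt ℝ (fun s => B s i j) t) :
    mderiv (fun s => A s * B s) t = mderiv A t * B t + A t * mderiv B t := by
  ext i j
  have key : HasDerivAt (fun s => (A s * B s) i j)
      ((mderiv A t * B t + A t * mderiv B t) i j) t := by
    have : ∀ s, (A s * B s) i j = ∑ k, A s i k * B s k j := fun s => Matrix.mul_apply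
    simp only [this]
    have : (mderiv A t * B t + A t * mderiv B t) i j
        = ∑ k, (deriv (fun s => A s i k) t * B t k j
            + A t i k * deriv (fun s => B s k j) t) := by
      simp [Matrix.mul_apply, Matrix.add_apply, mderiv, Finset.sum_add_distrib]
    rw [this]
    exact HasDerivAt.fun_sum fun k _ =>
      ((hA i k).hasDerivAt.mul (hB k j).hasDerivAt)
  simpa [mderiv] using key.deriv

lemma mderiv_inv_mul {n : ℕ} {A : ℝ → Matrix (Fin n) (Fin n) ℂ} {t : ℝ}
    (hA : ∀ s i j, DifferentiableAt ℝ (fun s' => A s' i j) s)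
    (hu : ∀ s, IsUnit (A s)) :
    mderiv (fun s => (A s)⁻¹) t * A t = -((A t)⁻¹ * mderiv A t) := by
  have hinv : ∀ s, (A s)⁻¹ * A s = 1 := fun s =>
    Matrix.nonsing_inv_mul _ ((Matrix.isUnit_iff_isUnit_det _).1 (hu s))
  have h1 : (fun s => (A s)⁻¹ * A s) = fun _ => (1 : Matrix (Fin n) (Fin n) ℂ) := by
    funext s; exact hinv s
  have h2 : mderiv (fun s => (A s)⁻¹ * A s) t = 0 := by
    rw [h1]; ext i j; simp [mderiv]
  rw [mderiv_mul (fun i j => diff_inv_entry (hA t) (hu t) i j) (hA t)] at h2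
  linear_combination (norm := abel) h2

/-- Gauge transforming the connection `A₊ = u⁻¹∂₊u + uX₊u⁻¹`, `A₋ = −(∂₋u)u⁻¹ + u⁻¹X₋u`
by `u⁻¹` (i.e. `A_± ↦ u⁻¹ A_± u − (∂_±(u⁻¹)) u`) yields `A₊' = h⁻¹∂₊h + X₊`,
`A₋' = h⁻¹X₋h`, where `h = u²`. -/
theorem statement3 {n : ℕ} (hn : 0 < n)
    (u : ℝ × ℝ → Matrix (Fin n) (Fin n) ℂ)
    (Xp Xm : Matrix (Fin n) (Fin n) ℂ)
    (hC1 : ∀ i j, ContDiff ℝ 1 fun p : ℝ × ℝ => u p i j)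
    (hinv : ∀ p, IsUnit (u p))
    (h : ℝ × ℝ → Matrix (Fin n) (Fin n) ℂ)
    (hdef : ∀ p, h p = u p * u p) :
    ∀ p : ℝ × ℝ,
      ((u p)⁻¹ * ((u p)⁻¹ * dplus u p + u p * Xp * (u p)⁻¹) * u p
          - dplus (fun q => (u q)⁻¹) p * u p = (h p)⁻¹ * dplus h p + Xp)
      ∧ ((u p)⁻¹ * (-(dminus u p * (u p)⁻¹) + (u p)⁻¹ * Xm * u p) * u p
          - dminus (fun q => (u q)⁻¹) p * u p = (h p)⁻¹ * Xm * h p) := by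
  intro p
  -- entrywise differentiability of u in each variable
  have hdiff : ∀ (q : ℝ × ℝ) i j, DifferentiableAt ℝ (fun p' : ℝ × ℝ => u p' i j) q :=
    fun q i j => ((hC1 i j).differentiable one_ne_zero) q
  set A : ℝ → Matrix (Fin n) (Fin n) ℂ := fun s => u (s, p.2) with hAdef
  set B : ℝ → Matrix (Fin n) (Fin n) ℂ := fun s => u (p.1, s) with hBdef
  have hAd : ∀ s i j, DifferentiableAt ℝ (fun s' => A s' i j) s := fun s i j =>
    ((hdiff (s, p.2) i j).comp s ((DifferentiableAt.prodMk differentiableAt_id (differentiableAt_const _))) :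
      DifferentiableAt ℝ ((fun p' : ℝ × ℝ => u p' i j) ∘ (fun s' : ℝ => (s', p.2))) s)
  have hBd : ∀ s i j, DifferentiableAt ℝ (fun s' => B s' i j) s := fun s i j =>
    ((hdiff (p.1, s) i j).comp s ((DifferentiableAt.prodMk (differentiableAt_const _) differentiableAt_id)) :
      DifferentiableAt ℝ ((fun p' : ℝ × ℝ => u p' i j) ∘ (fun s' : ℝ => (p.1, s'))) s)
  have hAu : ∀ s, IsUnit (A s) := fun s => hinv _
  have hBu : ∀ s, IsUnit (B s) := fun s => hinv _
  -- identify dplus/dminus with mderiv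
  have eA : dplus u p = mderiv A p.1 := rfl
  have eB : dminus u p = mderiv B p.2 := rfl
  have eAi : dplus (fun q => (u q)⁻¹) p = mderiv (fun s => (A s)⁻¹) p.1 := rfl
  have eBi : dminus (fun q => (u q)⁻¹) p = mderiv (fun s => (B s)⁻¹) p.2 := rfl
  have eh : dplus h p = mderiv (fun s => A s * A s) p.1 := by
    ext i j
    show deriv (fun s => h (s, p.2) i j) p.1 = deriv (fun s => (A s * A s) i j) p.1
    congr 1
    funext s
    rw [hdef]
  set U := u p with hU
  have hup : A p.1 = U := by simp [hAdef, hU]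
  have hbp : B p.2 = U := by simp [hBdef, hU]
  have hVU : U⁻¹ * U = 1 :=
    Matrix.nonsing_inv_mul _ ((Matrix.isUnit_iff_isUnit_det _).1 (hinv p))
  have hAinv : mderiv (fun s => (A s)⁻¹) p.1 * U = -(U⁻¹ * mderiv A p.1) := by
    rw [← hup]; exact mderiv_inv_mul hAd hAu
  have hBinv : mderiv (fun s => (B s)⁻¹) p.2 * U = -(U⁻¹ * mderiv B p.2) := by
    rw [← hbp]; exact mderiv_inv_mul hBd hBu
  have hDh : mderiv (fun s => A s * A s) p.1 = mderiv A p.1 * U + U * mderiv A p.1 := by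
    rw [← hup]; exact mderiv_mul (hAd p.1) (hAd p.1)
  have hhp : h p = U * U := hdef p
  have hhinv : (h p)⁻¹ = U⁻¹ * U⁻¹ := by rw [hhp, Matrix.mul_inv_rev]
  constructor
  · rw [eA, eAi, eh, hAinv, hDh, hhinv]
    set D := mderiv A p.1
    have e1 : U⁻¹ * (U⁻¹ * D + U * Xp * U⁻¹) * U = U⁻¹ * U⁻¹ * D * U + Xp := by
      rw [mul_add, add_mul]
      congr 1
      · simp only [mul_assoc]
      · calc U⁻¹ * (U * Xp * U⁻¹) * U = U⁻¹ * (U * (Xp * (U⁻¹ * U))) := by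
              simp only [mul_assoc]
          _ = Xp := by rw [hVU, mul_one, ← mul_assoc, hVU, one_mul]
    have e2 : U⁻¹ * U⁻¹ * (D * U + U * D) = U⁻¹ * U⁻¹ * D * U + U⁻¹ * D := by
      rw [mul_add]
      congr 1
      · simp only [mul_assoc]
      · calc U⁻¹ * U⁻¹ * (U * D) = U⁻¹ * (U⁻¹ * U * D) := by simp only [mul_assoc]
          _ = U⁻¹ * D := by rw [hVU, one_mul]
    rw [e1, e2, sub_neg_eq_add]
    abel
  · rw [eB, eBi, hBinv, hhinv, hhp]
    set D := mderiv B p.2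
    have f1 : U⁻¹ * -(D * U⁻¹) * U = -(U⁻¹ * D) := by
      calc U⁻¹ * -(D * U⁻¹) * U = -(U⁻¹ * (D * (U⁻¹ * U))) := by
            simp only [mul_neg, neg_mul, mul_assoc]
        _ = -(U⁻¹ * D) := by rw [hVU, mul_one]
    have f2 : U⁻¹ * (U⁻¹ * Xm * U) * U = U⁻¹ * U⁻¹ * (Xm * (U * U)) := by
      simp only [mul_assoc]
    rw [mul_add, add_mul, f1, f2, sub_neg_eq_add, ← mul_assoc, ← mul_assoc]
    abel
end

section
/- Let h : ℝ² → GLₙ(ℂ) have twice continuously differentiable entries and let D be a fixed n×n complex matrix with D * h(x) = h(x) * D for all x ∈ ℝ². Then Tr(D * ∂₊(h⁻¹ * ∂₋h)) = Tr(D * ∂₋(h⁻¹ * ∂₊h)); in particular the improvement tensor C_{μν} built from Tr(D * ∂_μ(h⁻¹∂_νh)) is symmetric. -/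
lemma key_fst {f : ℝ × ℝ → ℂ} {f' : ℝ × ℝ →L[ℝ] ℂ} {q : ℝ × ℝ} (hf : HasFDerivAt f f' q) :
    HasDerivAt (fun s => f (s, q.2)) (f' (1, 0)) q.1 := by
  have hg : HasDerivAt (fun s : ℝ => (s, q.2)) ((1 : ℝ), (0 : ℝ)) q.1 :=
    (hasDerivAt_id _).prodMk (hasDerivAt_const _ _)
  have hf' : HasFDerivAt f f' ((fun s : ℝ => (s, q.2)) q.1) := by simpa using hf
  exact hf'.comp_hasDerivAt q.1 hg

lemma key_snd {f : ℝ × ℝ → ℂ} {f' : ℝ × ℝ →L[ℝ] ℂ} {q : ℝ × ℝ} (hf : HasFDerivAt f f' q) :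
    HasDerivAt (fun t => f (q.1, t)) (f' (0, 1)) q.2 := by
  have hg : HasDerivAt (fun t : ℝ => (q.1, t)) ((0 : ℝ), (1 : ℝ)) q.2 :=
    (hasDerivAt_const _ _).prodMk (hasDerivAt_id _)
  have hf' : HasFDerivAt f f' ((fun t : ℝ => (q.1, t)) q.2) := by simpa using hf
  exact hf'.comp_hasDerivAt q.2 hg

lemma mixed_fst {f : ℝ × ℝ → ℂ} (hf : ContDiff ℝ 2 f) (q : ℝ × ℝ) :
    HasDerivAt (fun s => fderiv ℝ f (s, q.2) (0, 1))
      (fderiv ℝ (fderiv ℝ f) q (1, 0) (0, 1)) q.1 := by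
  have h1 : ContDiff ℝ 1 (fderiv ℝ f) := hf.fderiv_right (by norm_num)
  have h2 : DifferentiableAt ℝ (fderiv ℝ f) q := (h1.differentiable one_ne_zero).differentiableAt
  have h3 : HasFDerivAt (fun q' => fderiv ℝ f q' ((0 : ℝ), (1 : ℝ)))
      ((ContinuousLinearMap.apply ℝ ℂ ((0 : ℝ), (1 : ℝ))).comp (fderiv ℝ (fderiv ℝ f) q)) q :=
    (ContinuousLinearMap.apply ℝ ℂ ((0 : ℝ), (1 : ℝ))).hasFDerivAt.comp q h2.hasFDerivAt
  simpa using key_fst h3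

lemma mixed_snd {f : ℝ × ℝ → ℂ} (hf : ContDiff ℝ 2 f) (q : ℝ × ℝ) :
    HasDerivAt (fun t => fderiv ℝ f (q.1, t) (1, 0))
      (fderiv ℝ (fderiv ℝ f) q (1, 0) (0, 1)) q.2 := by
  have h1 : ContDiff ℝ 1 (fderiv ℝ f) := hf.fderiv_right (by norm_num)
  have h2 : DifferentiableAt ℝ (fderiv ℝ f) q := (h1.differentiable one_ne_zero).differentiableAt
  have h3 : HasFDerivAt (fun q' => fderiv ℝ f q' ((1 : ℝ), (0 : ℝ)))
      ((ContinuousLinearMap.apply ℝ ℂ ((1 : ℝ), (0 : ℝ))).comp (fderiv ℝ (fderiv ℝ f) q)) q :=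
    (ContinuousLinearMap.apply ℝ ℂ ((1 : ℝ), (0 : ℝ))).hasFDerivAt.comp q h2.hasFDerivAt
  have hsymm : fderiv ℝ (fderiv ℝ f) q (0, 1) (1, 0) = fderiv ℝ (fderiv ℝ f) q (1, 0) (0, 1) :=
    hf.contDiffAt.isSymmSndFDerivAt (by simp) (0, 1) (1, 0)
  have := key_snd h3
  simpa [hsymm] using this

lemma det_diffAt {n : ℕ} {M : ℝ → Matrix (Fin n) (Fin n) ℂ} {a : ℝ}
    (hM : ∀ i j, DifferentiableAt ℝ (fun s => M s i j) a) :
    DifferentiableAt ℝ (fun s => (M s).det) a := by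
  simp only [Matrix.det_apply']
  exact DifferentiableAt.fun_sum fun σ _ =>
    (DifferentiableAt.fun_finsetProd fun i _ => hM (σ i) i).const_mul _

lemma inv_entry_diffAt {n : ℕ} {M : ℝ → Matrix (Fin n) (Fin n) ℂ} {a : ℝ}
    (hM : ∀ i j, DifferentiableAt ℝ (fun s => M s i j) a)
    (hU : IsUnit (M a)) (i j : Fin n) :
    DifferentiableAt ℝ (fun s => (M s)⁻¹ i j) a := by
  have hdet : DifferentiableAt ℝ (fun s => (M s).det) a := det_diffAt hM
  have hne : (M a).det ≠ 0 :=
    IsUnit.ne_zero ((Matrix.isUnit_iff_isUnit_det _).mp hU)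
  have hadj : DifferentiableAt ℝ (fun s => (M s).adjugate i j) a := by
    simp only [Matrix.adjugate_apply]
    refine det_diffAt fun i' j' => ?_
    by_cases hc : i' = j
    · simp only [Matrix.updateRow_apply, hc, if_true]
      exact differentiableAt_const _
    · simp only [Matrix.updateRow_apply, hc, if_false]
      exact hM i' j'
  have hrw : (fun s => (M s)⁻¹ i j) = fun s => ((M s).det)⁻¹ * (M s).adjugate i j := by
    funext s
    rw [Matrix.inv_def, Matrix.smul_apply, Ring.inverse_eq_inv, smul_eq_mul]
  rw [hrw]
  exact (hdet.inv hne).mul hadj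

lemma inv_hasDerivAt {n : ℕ} {M : ℝ → Matrix (Fin n) (Fin n) ℂ} {a : ℝ}
    {A' : Matrix (Fin n) (Fin n) ℂ}
    (hM : ∀ i j, HasDerivAt (fun s => M s i j) (A' i j) a)
    (hU : ∀ s, IsUnit (M s)) (i j : Fin n) :
    HasDerivAt (fun s => (M s)⁻¹ i j) ((-((M a)⁻¹ * A' * (M a)⁻¹)) i j) a := by
  have hMdet : ∀ s, IsUnit (M s).det := fun s => (Matrix.isUnit_iff_isUnit_det _).mp (hU s)
  have hN : ∀ i j, HasDerivAt (fun s => (M s)⁻¹ i j)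
      ((Matrix.of fun i j => deriv (fun s => (M s)⁻¹ i j) a) i j) a := fun i j =>
    (inv_entry_diffAt (fun i j => (hM i j).differentiableAt) (hU a) i j).hasDerivAt
  set N' : Matrix (Fin n) (Fin n) ℂ :=
    Matrix.of fun i j => deriv (fun s => (M s)⁻¹ i j) a with hN'def
  have key : N' * M a + (M a)⁻¹ * A' = 0 := by
    ext i k
    have h1 : HasDerivAt (fun s => ∑ l, (M s)⁻¹ i l * M s l k)
        (∑ l, (N' i l * M a l k + (M a)⁻¹ i l * A' l k)) a :=
      HasDerivAt.fun_sum fun l _ => (hN i l).mul (hM l k)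
    have h2 : (fun s => ∑ l, (M s)⁻¹ i l * M s l k)
        = fun _ : ℝ => (1 : Matrix (Fin n) (Fin n) ℂ) i k := by
      funext s
      rw [← Matrix.mul_apply, Matrix.nonsing_inv_mul _ (hMdet s)]
    rw [h2] at h1
    have h3 := h1.unique (hasDerivAt_const _ _)
    simp only [Matrix.add_apply, Matrix.mul_apply, Matrix.zero_apply]
    rw [Finset.sum_add_distrib] at h3
    exact h3
  have h4 : N' * M a = -((M a)⁻¹ * A') := eq_neg_of_add_eq_zero_left key
  have hfinal : N' = -((M a)⁻¹ * A' * (M a)⁻¹) := by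
    calc N' = N' * (M a * (M a)⁻¹) := by rw [Matrix.mul_nonsing_inv _ (hMdet a), mul_one]
      _ = N' * M a * (M a)⁻¹ := (mul_assoc _ _ _).symm
      _ = -((M a)⁻¹ * A') * (M a)⁻¹ := by rw [h4]
      _ = -((M a)⁻¹ * A' * (M a)⁻¹) := by rw [neg_mul]
  rw [← hfinal]
  exact hN i j

/-- Matrix of `∂₊` entrywise, via `fderiv`. -/
noncomputable def fdP {n : ℕ} (h : ℝ × ℝ → Matrix (Fin n) (Fin n) ℂ) (p : ℝ × ℝ) :
    Matrix (Fin n) (Fin n) ℂ :=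
  Matrix.of fun i j => fderiv ℝ (fun q : ℝ × ℝ => h q i j) p (1, 0)

/-- Matrix of `∂₋` entrywise, via `fderiv`. -/
noncomputable def fdM {n : ℕ} (h : ℝ × ℝ → Matrix (Fin n) (Fin n) ℂ) (p : ℝ × ℝ) :
    Matrix (Fin n) (Fin n) ℂ :=
  Matrix.of fun i j => fderiv ℝ (fun q : ℝ × ℝ => h q i j) p (0, 1)

/-- Matrix of mixed second partials, via the second `fderiv`. -/
noncomputable def fdS {n : ℕ} (h : ℝ × ℝ → Matrix (Fin n) (Fin n) ℂ) (p : ℝ × ℝ) :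
    Matrix (Fin n) (Fin n) ℂ :=
  Matrix.of fun i j => fderiv ℝ (fderiv ℝ (fun q : ℝ × ℝ => h q i j)) p (1, 0) (0, 1)

set_option maxHeartbeats 1000000 in
/-- If `D` commutes with `h` everywhere then
`Tr(D ∂₊(h⁻¹∂₋h)) = Tr(D ∂₋(h⁻¹∂₊h))`: the improvement tensor is symmetric. -/
theorem statement6 {n : ℕ} (hn : 0 < n)
    (h : ℝ × ℝ → Matrix (Fin n) (Fin n) ℂ)
    (D : Matrix (Fin n) (Fin n) ℂ)
    (hC2 : ∀ i j, ContDiff ℝ 2 fun p : ℝ × ℝ => h p i j)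
    (hinv : ∀ p, IsUnit (h p))
    (hcomm : ∀ p, D * h p = h p * D) :
    ∀ p : ℝ × ℝ,
      Matrix.trace (D * dplus (fun q => (h q)⁻¹ * dminus h q) p)
        = Matrix.trace (D * dminus (fun q => (h q)⁻¹ * dplus h q) p) := by
  rintro ⟨a, b⟩
  have hdiff : ∀ i j (q : ℝ × ℝ), DifferentiableAt ℝ (fun p : ℝ × ℝ => h p i j) q :=
    fun i j q => ((hC2 i j).differentiable (by norm_num)).differentiableAt
  set E : Matrix (Fin n) (Fin n) ℂ := (h (a, b))⁻¹ with hEdef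
  set A : Matrix (Fin n) (Fin n) ℂ := fdP h (a, b) with hAdef
  set B : Matrix (Fin n) (Fin n) ℂ := fdM h (a, b) with hBdef
  set S : Matrix (Fin n) (Fin n) ℂ := fdS h (a, b) with hSdef
  -- entrywise derivatives of h along the two lines through (a,b)
  have hA : ∀ i j, HasDerivAt (fun s => h (s, b) i j) (A i j) a := by
    intro i j
    rw [hAdef]
    exact key_fst (q := (a, b)) (hdiff i j (a, b)).hasFDerivAt
  have hB : ∀ i j, HasDerivAt (fun t => h (a, t) i j) (B i j) b := by
    intro i j
    rw [hBdef]
    exact key_snd (q := (a, b)) (hdiff i j (a, b)).hasFDerivAt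
  -- dminus/dplus entries as fderiv values
  have hBline : ∀ (s : ℝ) i j,
      dminus h (s, b) i j = fderiv ℝ (fun q : ℝ × ℝ => h q i j) (s, b) (0, 1) := fun s i j =>
    (key_snd (q := (s, b)) (hdiff i j (s, b)).hasFDerivAt).deriv
  have hAline : ∀ (t : ℝ) i j,
      dplus h (a, t) i j = fderiv ℝ (fun q : ℝ × ℝ => h q i j) (a, t) (1, 0) := fun t i j =>
    (key_fst (q := (a, t)) (hdiff i j (a, t)).hasFDerivAt).deriv
  have hBa : dminus h (a, b) = B := by
    ext i j; rw [hBdef]; exact hBline a i j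
  have hAa : dplus h (a, b) = A := by
    ext i j; rw [hAdef]; exact hAline b i j
  -- derivatives of the partials
  have hSd1 : ∀ i j, HasDerivAt (fun s => dminus h (s, b) i j) (S i j) a := by
    intro i j
    have hrw : (fun s => dminus h (s, b) i j)
        = fun s => fderiv ℝ (fun q : ℝ × ℝ => h q i j) (s, b) ((0 : ℝ), (1 : ℝ)) :=
      funext fun s => hBline s i j
    rw [hrw, hSdef]
    exact mixed_fst (hC2 i j) (a, b)
  have hSd2 : ∀ i j, HasDerivAt (fun t => dplus h (a, t) i j) (S i j) b := by
    intro i j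
    have hrw : (fun t => dplus h (a, t) i j)
        = fun t => fderiv ℝ (fun q : ℝ × ℝ => h q i j) (a, t) ((1 : ℝ), (0 : ℝ)) :=
      funext fun t => hAline t i j
    rw [hrw, hSdef]
    exact mixed_snd (hC2 i j) (a, b)
  -- derivatives of the inverse along the two lines
  have hEA : ∀ i j, HasDerivAt (fun s => (h (s, b))⁻¹ i j) ((-(E * A * E)) i j) a := by
    intro i j
    rw [hEdef]
    exact inv_hasDerivAt hA (fun s => hinv (s, b)) i j
  have hEB : ∀ i j, HasDerivAt (fun t => (h (a, t))⁻¹ i j) ((-(E * B * E)) i j) b := by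
    intro i j
    rw [hEdef]
    exact inv_hasDerivAt hB (fun t => hinv (a, t)) i j
  -- the two claims
  have claim1 : dplus (fun q => (h q)⁻¹ * dminus h q) (a, b) = -(E * A * E) * B + E * S := by
    ext i j
    have h7 : HasDerivAt (fun s => ∑ l, (h (s, b))⁻¹ i l * dminus h (s, b) l j)
        (∑ l, ((-(E * A * E)) i l * dminus h (a, b) l j + (h (a, b))⁻¹ i l * S l j)) a :=
      HasDerivAt.fun_sum fun l _ => (hEA i l).mul (hSd1 l j)
    rw [hBa] at h7
    have h8 : HasDerivAt (fun s => ((h (s, b))⁻¹ * dminus h (s, b)) i j)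
        ((-(E * A * E) * B + E * S) i j) a := by
      have hfun : (fun s => ((h (s, b))⁻¹ * dminus h (s, b)) i j)
          = fun s => ∑ l, (h (s, b))⁻¹ i l * dminus h (s, b) l j :=
        funext fun s => Matrix.mul_apply
      rw [hfun]
      convert h7 using 1
      simp [Matrix.add_apply, Matrix.mul_apply, Finset.sum_add_distrib, hEdef]
    simpa [dplus] using h8.deriv
  have claim2 : dminus (fun q => (h q)⁻¹ * dplus h q) (a, b) = -(E * B * E) * A + E * S := by
    ext i j
    have h7 : HasDerivAt (fun t => ∑ l, (h (a, t))⁻¹ i l * dplus h (a, t) l j)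
        (∑ l, ((-(E * B * E)) i l * dplus h (a, b) l j + (h (a, b))⁻¹ i l * S l j)) b :=
      HasDerivAt.fun_sum fun l _ => (hEB i l).mul (hSd2 l j)
    rw [hAa] at h7
    have h8 : HasDerivAt (fun t => ((h (a, t))⁻¹ * dplus h (a, t)) i j)
        ((-(E * B * E) * A + E * S) i j) b := by
      have hfun : (fun t => ((h (a, t))⁻¹ * dplus h (a, t)) i j)
          = fun t => ∑ l, (h (a, t))⁻¹ i l * dplus h (a, t) l j :=
        funext fun t => Matrix.mul_apply
      rw [hfun]
      convert h7 using 1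
      simp [Matrix.add_apply, Matrix.mul_apply, Finset.sum_add_distrib, hEdef]
    simpa [dminus] using h8.deriv
  -- commutation facts
  have hu : IsUnit (h (a, b)).det := (Matrix.isUnit_iff_isUnit_det _).mp (hinv (a, b))
  have h1 : E * h (a, b) = 1 := Matrix.nonsing_inv_mul _ hu
  have h2 : h (a, b) * E = 1 := Matrix.mul_nonsing_inv _ hu
  have hDE : D * E = E * D := by
    calc D * E = (E * h (a, b)) * D * E := by rw [h1, one_mul]
      _ = E * (h (a, b) * D) * E := by rw [mul_assoc E (h (a, b)) D]
      _ = E * (D * h (a, b)) * E := by rw [hcomm]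
      _ = E * D * (h (a, b) * E) := by simp only [mul_assoc]
      _ = E * D := by rw [h2, mul_one]
  have hDA : D * A = A * D := by
    ext i j
    have hL : HasDerivAt (fun s => ∑ l, D i l * h (s, b) l j) ((D * A) i j) a := by
      have := HasDerivAt.fun_sum (fun l (_ : l ∈ Finset.univ) => (hA l j).const_mul (D i l))
      rw [Matrix.mul_apply]
      exact this
    have hR : HasDerivAt (fun s => ∑ l, h (s, b) i l * D l j) ((A * D) i j) a := by
      have := HasDerivAt.fun_sum (fun l (_ : l ∈ Finset.univ) => (hA i l).mul_const (D l j))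
      rw [Matrix.mul_apply]
      exact this
    have heq : (fun s => ∑ l, D i l * h (s, b) l j) = fun s => ∑ l, h (s, b) i l * D l j := by
      funext s
      rw [← Matrix.mul_apply, ← Matrix.mul_apply, hcomm (s, b)]
    rw [heq] at hL
    exact hL.unique hR
  have hDB : D * B = B * D := by
    ext i j
    have hL : HasDerivAt (fun t => ∑ l, D i l * h (a, t) l j) ((D * B) i j) b := by
      have := HasDerivAt.fun_sum (fun l (_ : l ∈ Finset.univ) => (hB l j).const_mul (D i l))
      rw [Matrix.mul_apply]
      exact this
    have hR : HasDerivAt (fun t => ∑ l, h (a, t) i l * D l j) ((B * D) i j) b := by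
      have := HasDerivAt.fun_sum (fun l (_ : l ∈ Finset.univ) => (hB i l).mul_const (D l j))
      rw [Matrix.mul_apply]
      exact this
    have heq : (fun t => ∑ l, D i l * h (a, t) l j) = fun t => ∑ l, h (a, t) i l * D l j := by
      funext t
      rw [← Matrix.mul_apply, ← Matrix.mul_apply, hcomm (a, t)]
    rw [heq] at hL
    exact hL.unique hR
  -- the trace identity
  have key : Matrix.trace (D * (E * (A * (E * B)))) = Matrix.trace (D * (E * (B * (E * A)))) := by
    have c1 : D * (E * (A * (E * B))) = (D * E * A) * (E * B) := by simp only [mul_assoc]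
    rw [c1, Matrix.trace_mul_comm]
    congr 1
    calc E * B * (D * E * A) = E * (B * D) * (E * A) := by simp only [mul_assoc]
      _ = E * (D * B) * (E * A) := by rw [← hDB]
      _ = E * D * (B * (E * A)) := by simp only [mul_assoc]
      _ = D * E * (B * (E * A)) := by rw [← hDE]
      _ = D * (E * (B * (E * A))) := by simp only [mul_assoc]
  rw [claim1, claim2, mul_add, mul_add, Matrix.trace_add, Matrix.trace_add]
  congr 1
  have e1 : D * (-(E * A * E) * B) = -(D * (E * (A * (E * B)))) := by
    simp only [neg_mul, mul_neg, mul_assoc]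
  have e2 : D * (-(E * B * E) * A) = -(D * (E * (B * (E * A)))) := by
    simp only [neg_mul, mul_neg, mul_assoc]
  rw [e1, e2, Matrix.trace_neg, Matrix.trace_neg, key]
end

section
/- Let h : ℝ² → GLₙ(ℂ) have three times continuously differentiable entries, let X₊, X₋, D be fixed n×n complex matrices with [D, X₊] = X₊, and suppose h satisfies the Toda equation ∂₋(h⁻¹ * ∂₊h) = [X₊, h⁻¹ * X₋ * h]. Then the quantity Θ₊₊ := Tr((h⁻¹ * ∂₊h)²) − 2 Tr(D * ∂₊(h⁻¹ * ∂₊h)) is chiral: ∂₋Θ₊₊ = 0. -/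
open Matrix

namespace Stmt8Aux

variable {n : ℕ}

/-- partial derivative in first coordinate (scalar). -/
noncomputable def Dp (f : ℝ × ℝ → ℂ) : ℝ × ℝ → ℂ :=
  fun p => deriv (fun s => f (s, p.2)) p.1

/-- partial derivative in second coordinate (scalar). -/
noncomputable def Dm (f : ℝ × ℝ → ℂ) : ℝ × ℝ → ℂ :=
  fun p => deriv (fun s => f (p.1, s)) p.2

lemma hasDerivAt_slice1 (f : ℝ × ℝ → ℂ) (p : ℝ × ℝ) (hf : DifferentiableAt ℝ f p) :
    HasDerivAt (fun s => f (s, p.2)) (fderiv ℝ f p (1, 0)) p.1 := by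
  have h1 : HasDerivAt (fun s : ℝ => (s, p.2)) ((1 : ℝ), (0 : ℝ)) p.1 :=
    (hasDerivAt_id p.1).prodMk (hasDerivAt_const p.1 p.2)
  exact hf.hasFDerivAt.comp_hasDerivAt p.1 h1

lemma hasDerivAt_slice2 (f : ℝ × ℝ → ℂ) (p : ℝ × ℝ) (hf : DifferentiableAt ℝ f p) :
    HasDerivAt (fun s => f (p.1, s)) (fderiv ℝ f p (0, 1)) p.2 := by
  have h1 : HasDerivAt (fun s : ℝ => (p.1, s)) ((0 : ℝ), (1 : ℝ)) p.2 :=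
    (hasDerivAt_const p.2 p.1).prodMk (hasDerivAt_id p.2)
  exact hf.hasFDerivAt.comp_hasDerivAt p.2 h1

lemma Dp_eq (f : ℝ × ℝ → ℂ) (p : ℝ × ℝ) (hf : DifferentiableAt ℝ f p) :
    Dp f p = fderiv ℝ f p (1, 0) := (hasDerivAt_slice1 f p hf).deriv

lemma Dm_eq (f : ℝ × ℝ → ℂ) (p : ℝ × ℝ) (hf : DifferentiableAt ℝ f p) :
    Dm f p = fderiv ℝ f p (0, 1) := (hasDerivAt_slice2 f p hf).deriv

lemma slice1_diff (f : ℝ × ℝ → ℂ) (hf : ContDiff ℝ 1 f) (b : ℝ) :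
    Differentiable ℝ (fun s => f (s, b)) :=
  (hf.comp (contDiff_id.prodMk contDiff_const)).differentiable one_ne_zero

lemma slice2_diff (f : ℝ × ℝ → ℂ) (hf : ContDiff ℝ 1 f) (a : ℝ) :
    Differentiable ℝ (fun s => f (a, s)) :=
  (hf.comp (contDiff_const.prodMk contDiff_id)).differentiable one_ne_zero

lemma contDiff_Dp {k : ℕ} (f : ℝ × ℝ → ℂ) (hf : ContDiff ℝ (k + 1) f) :
    ContDiff ℝ k (Dp f) := by
  have hdf : Differentiable ℝ f := hf.differentiable (by simp)
  have : Dp f = fun p => fderiv ℝ f p (1, 0) := funext fun p => Dp_eq f p (hdf p)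
  rw [this]
  have h1 : ContDiff ℝ k (fderiv ℝ f) := hf.fderiv_right (by exact_mod_cast le_rfl)
  exact h1.clm_apply contDiff_const

lemma contDiff_Dm {k : ℕ} (f : ℝ × ℝ → ℂ) (hf : ContDiff ℝ (k + 1) f) :
    ContDiff ℝ k (Dm f) := by
  have hdf : Differentiable ℝ f := hf.differentiable (by simp)
  have : Dm f = fun p => fderiv ℝ f p (0, 1) := funext fun p => Dm_eq f p (hdf p)
  rw [this]
  have h1 : ContDiff ℝ k (fderiv ℝ f) := hf.fderiv_right (by exact_mod_cast le_rfl)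
  exact h1.clm_apply contDiff_const

/-- Clairaut: mixed partials of a `C²` function commute. -/
lemma clairaut (f : ℝ × ℝ → ℂ) (hf : ContDiff ℝ 2 f) (p : ℝ × ℝ) :
    Dm (Dp f) p = Dp (Dm f) p := by
  have hdf : Differentiable ℝ f := hf.differentiable two_ne_zero
  have hf1 : ContDiff ℝ 1 (fderiv ℝ f) := hf.fderiv_right (by exact_mod_cast le_rfl)
  have hdf1 : Differentiable ℝ (fderiv ℝ f) := hf1.differentiable one_ne_zero
  have hDp : Dp f = fun q => fderiv ℝ f q (1, 0) := funext fun q => Dp_eq f q (hdf q)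
  have hDm : Dm f = fun q => fderiv ℝ f q (0, 1) := funext fun q => Dm_eq f q (hdf q)
  have hdp : DifferentiableAt ℝ (fun q => fderiv ℝ f q (1, 0)) p :=
    (hdf1 p).clm_apply (differentiableAt_const _)
  have hdm : DifferentiableAt ℝ (fun q => fderiv ℝ f q (0, 1)) p :=
    (hdf1 p).clm_apply (differentiableAt_const _)
  have e1 : Dm (Dp f) p = fderiv ℝ (fderiv ℝ f) p (0, 1) (1, 0) := by
    rw [hDp, Dm_eq _ p hdp, fderiv_clm_apply (hdf1 p) (differentiableAt_const _)]
    simp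
  have e2 : Dp (Dm f) p = fderiv ℝ (fderiv ℝ f) p (1, 0) (0, 1) := by
    rw [hDm, Dp_eq _ p hdm, fderiv_clm_apply (hdf1 p) (differentiableAt_const _)]
    simp
  rw [e1, e2]
  exact (hf.contDiffAt.isSymmSndFDerivAt (by simp)) _ _

section Matrices

variable (F G : ℝ × ℝ → Matrix (Fin n) (Fin n) ℂ)

/-- entrywise `C^k`. -/
def EntCD (k : ℕ) (F : ℝ × ℝ → Matrix (Fin n) (Fin n) ℂ) : Prop :=
  ∀ i j, ContDiff ℝ k fun q => F q i j

lemma EntCD.of_le {k l : ℕ} {F : ℝ × ℝ → Matrix (Fin n) (Fin n) ℂ}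
    (h : EntCD k F) (hlk : l ≤ k) : EntCD l F :=
  fun i j => (h i j).of_le (by exact_mod_cast hlk)

lemma EntCD.const (k : ℕ) (X : Matrix (Fin n) (Fin n) ℂ) : EntCD k (fun _ => X) :=
  fun _ _ => contDiff_const

lemma EntCD.mul {k : ℕ} {F G : ℝ × ℝ → Matrix (Fin n) (Fin n) ℂ}
    (hF : EntCD k F) (hG : EntCD k G) : EntCD k (fun q => F q * G q) := by
  intro i j
  have : (fun q => (F q * G q) i j) = fun q => ∑ l, F q i l * G q l j := by
    funext q; simp [Matrix.mul_apply]
  rw [this]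
  exact ContDiff.sum fun l _ => (hF i l).mul (hG l j)

lemma EntCD.sub {k : ℕ} {F G : ℝ × ℝ → Matrix (Fin n) (Fin n) ℂ}
    (hF : EntCD k F) (hG : EntCD k G) : EntCD k (fun q => F q - G q) := by
  intro i j
  have : (fun q => (F q - G q) i j) = fun q => F q i j - G q i j := by
    funext q; simp [Matrix.sub_apply]
  rw [this]; exact (hF i j).sub (hG i j)

lemma EntCD.dplus {k : ℕ} {F : ℝ × ℝ → Matrix (Fin n) (Fin n) ℂ}
    (hF : EntCD (k + 1) F) : EntCD k (_root_.dplus F) := by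
  intro i j
  have : (fun q => _root_.dplus F q i j) = Dp (fun q => F q i j) := rfl
  rw [this]; exact contDiff_Dp _ (hF i j)

lemma EntCD.dminus {k : ℕ} {F : ℝ × ℝ → Matrix (Fin n) (Fin n) ℂ}
    (hF : EntCD (k + 1) F) : EntCD k (_root_.dminus F) := by
  intro i j
  have : (fun q => _root_.dminus F q i j) = Dm (fun q => F q i j) := rfl
  rw [this]; exact contDiff_Dm _ (hF i j)

lemma entry_slice2_diff {F : ℝ × ℝ → Matrix (Fin n) (Fin n) ℂ}
    (hF : EntCD 1 F) (p : ℝ × ℝ) (i j : Fin n) :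
    DifferentiableAt ℝ (fun s => F (p.1, s) i j) p.2 :=
  slice2_diff _ (hF i j) p.1 p.2

lemma entry_slice1_diff {F : ℝ × ℝ → Matrix (Fin n) (Fin n) ℂ}
    (hF : EntCD 1 F) (p : ℝ × ℝ) (i j : Fin n) :
    DifferentiableAt ℝ (fun s => F (s, p.2) i j) p.1 :=
  slice1_diff _ (hF i j) p.2 p.1

lemma dminus_mul {F G : ℝ × ℝ → Matrix (Fin n) (Fin n) ℂ}
    (hF : EntCD 1 F) (hG : EntCD 1 G) (p : ℝ × ℝ) :
    dminus (fun q => F q * G q) p = dminus F p * G p + F p * dminus G p := by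
  ext i j
  show deriv (fun s => (F (p.1, s) * G (p.1, s)) i j) p.2 = _
  have e : (fun s => (F (p.1, s) * G (p.1, s)) i j)
      = fun s => ∑ l, F (p.1, s) i l * G (p.1, s) l j := by
    funext s; simp [Matrix.mul_apply]
  rw [e, deriv_fun_sum (A := fun l s => F (p.1, s) i l * G (p.1, s) l j) (fun l _ =>
    ((entry_slice2_diff hF p i l).mul (entry_slice2_diff hG p l j)))]
  have : ∀ l, deriv (fun s => F (p.1, s) i l * G (p.1, s) l j) p.2
      = deriv (fun s => F (p.1, s) i l) p.2 * G p l j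
        + F p i l * deriv (fun s => G (p.1, s) l j) p.2 := by
    intro l
    rw [deriv_fun_mul (entry_slice2_diff hF p i l) (entry_slice2_diff hG p l j)]
  simp only [this]
  rw [Finset.sum_add_distrib]
  simp [Matrix.add_apply, Matrix.mul_apply, dminus]

lemma dplus_mul {F G : ℝ × ℝ → Matrix (Fin n) (Fin n) ℂ}
    (hF : EntCD 1 F) (hG : EntCD 1 G) (p : ℝ × ℝ) :
    dplus (fun q => F q * G q) p = dplus F p * G p + F p * dplus G p := by
  ext i j
  show deriv (fun s => (F (s, p.2) * G (s, p.2)) i j) p.1 = _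
  have e : (fun s => (F (s, p.2) * G (s, p.2)) i j)
      = fun s => ∑ l, F (s, p.2) i l * G (s, p.2) l j := by
    funext s; simp [Matrix.mul_apply]
  rw [e, deriv_fun_sum (A := fun l s => F (s, p.2) i l * G (s, p.2) l j) (fun l _ =>
    ((entry_slice1_diff hF p i l).mul (entry_slice1_diff hG p l j)))]
  have : ∀ l, deriv (fun s => F (s, p.2) i l * G (s, p.2) l j) p.1
      = deriv (fun s => F (s, p.2) i l) p.1 * G p l j
        + F p i l * deriv (fun s => G (s, p.2) l j) p.1 := by
    intro l
    rw [deriv_fun_mul (entry_slice1_diff hF p i l) (entry_slice1_diff hG p l j)]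
  simp only [this]
  rw [Finset.sum_add_distrib]
  simp [Matrix.add_apply, Matrix.mul_apply, dplus]

lemma dplus_sub {F G : ℝ × ℝ → Matrix (Fin n) (Fin n) ℂ}
    (hF : EntCD 1 F) (hG : EntCD 1 G) (p : ℝ × ℝ) :
    dplus (fun q => F q - G q) p = dplus F p - dplus G p := by
  ext i j
  show deriv (fun s => (F (s, p.2) - G (s, p.2)) i j) p.1 = _
  have e : (fun s => (F (s, p.2) - G (s, p.2)) i j)
      = fun s => F (s, p.2) i j - G (s, p.2) i j := by
    funext s; simp [Matrix.sub_apply]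
  rw [e, deriv_fun_sub (entry_slice1_diff hF p i j) (entry_slice1_diff hG p i j)]
  simp [Matrix.sub_apply, dplus]

lemma dplus_const (X : Matrix (Fin n) (Fin n) ℂ) (p : ℝ × ℝ) :
    dplus (fun _ : ℝ × ℝ => X) p = 0 := by
  ext i j; simp [dplus]

lemma dplus_const_mul {F : ℝ × ℝ → Matrix (Fin n) (Fin n) ℂ}
    (hF : EntCD 1 F) (X : Matrix (Fin n) (Fin n) ℂ) (p : ℝ × ℝ) :
    dplus (fun q => X * F q) p = X * dplus F p := by
  have := dplus_mul (EntCD.const 1 X) hF p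
  simpa [dplus_const] using this

lemma dplus_mul_const {F : ℝ × ℝ → Matrix (Fin n) (Fin n) ℂ}
    (hF : EntCD 1 F) (X : Matrix (Fin n) (Fin n) ℂ) (p : ℝ × ℝ) :
    dplus (fun q => F q * X) p = dplus F p * X := by
  have := dplus_mul hF (EntCD.const 1 X) p
  simpa [dplus_const] using this

lemma dminus_const (X : Matrix (Fin n) (Fin n) ℂ) (p : ℝ × ℝ) :
    dminus (fun _ : ℝ × ℝ => X) p = 0 := by
  ext i j; simp [dminus]

lemma dminus_const_mul {F : ℝ × ℝ → Matrix (Fin n) (Fin n) ℂ}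
    (hF : EntCD 1 F) (X : Matrix (Fin n) (Fin n) ℂ) (p : ℝ × ℝ) :
    dminus (fun q => X * F q) p = X * dminus F p := by
  have := dminus_mul (EntCD.const 1 X) hF p
  simpa [dminus_const] using this

lemma trace_slice2_hasDerivAt {F : ℝ × ℝ → Matrix (Fin n) (Fin n) ℂ}
    (hF : EntCD 1 F) (p : ℝ × ℝ) :
    HasDerivAt (fun s => Matrix.trace (F (p.1, s))) (Matrix.trace (dminus F p)) p.2 := by
  have e : (fun s => Matrix.trace (F (p.1, s))) = fun s => ∑ i, F (p.1, s) i i := by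
    funext s; simp [Matrix.trace, Matrix.diag]
  have e2 : Matrix.trace (dminus F p) = ∑ i, deriv (fun s => F (p.1, s) i i) p.2 := by
    simp [Matrix.trace, Matrix.diag, dminus]
  rw [e, e2]
  exact HasDerivAt.fun_sum fun i _ => (entry_slice2_diff hF p i i).hasDerivAt

lemma dminus_dplus_comm {F : ℝ × ℝ → Matrix (Fin n) (Fin n) ℂ}
    (hF : EntCD 2 F) (p : ℝ × ℝ) :
    dminus (dplus F) p = dplus (dminus F) p := by
  ext i j
  exact clairaut (fun q => F q i j) (hF i j) p

/-- smoothness of the entries of the inverse. -/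
lemma contDiff_det {k : ℕ} {F : ℝ × ℝ → Matrix (Fin n) (Fin n) ℂ}
    (hF : EntCD k F) : ContDiff ℝ k fun q => (F q).det := by
  have : (fun q => (F q).det)
      = fun q => ∑ σ : Equiv.Perm (Fin n),
          ((Equiv.Perm.sign σ : ℤ) : ℂ) * ∏ i, F q (σ i) i := by
    funext q; rw [Matrix.det_apply']
  rw [this]
  exact ContDiff.sum fun σ _ =>
    contDiff_const.mul (contDiff_prod fun i _ => hF (σ i) i)

lemma EntCD.inv {k : ℕ} {F : ℝ × ℝ → Matrix (Fin n) (Fin n) ℂ}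
    (hF : EntCD k F) (hU : ∀ q, IsUnit (F q)) : EntCD k fun q => (F q)⁻¹ := by
  intro i j
  have hdet : ContDiff ℝ k fun q => (F q).det := contDiff_det hF
  have hne : ∀ q, (F q).det ≠ 0 := fun q =>
    ((Matrix.isUnit_iff_isUnit_det (F q)).mp (hU q)).ne_zero
  have hadj : ContDiff ℝ k fun q => (F q).adjugate i j := by
    have e : (fun q => (F q).adjugate i j)
        = fun q => ((F q).updateRow j (Pi.single i 1)).det := by
      funext q; rw [Matrix.adjugate_apply]
    rw [e]
    refine contDiff_det ?_
    intro a b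
    by_cases hab : a = j
    · simp only [Matrix.updateRow_apply, hab, if_true]
      exact contDiff_const
    · simp only [Matrix.updateRow_apply, hab, if_false]
      exact hF a b
  have e : (fun q => (F q)⁻¹ i j)
      = fun q => ((F q).det)⁻¹ * (F q).adjugate i j := by
    funext q
    rw [Matrix.inv_def, Matrix.smul_apply, Ring.inverse_eq_inv', smul_eq_mul]
  rw [e]
  exact (hdet.inv hne).mul hadj

/-- the final trace identity. -/
lemma trace_identity (a m Xp D : Matrix (Fin n) (Fin n) ℂ)
    (hD : D * Xp - Xp * D = Xp) :
    Matrix.trace ((Xp * m - m * Xp) * a + a * (Xp * m - m * Xp))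
      - 2 * Matrix.trace (D * (Xp * (m * a - a * m) - (m * a - a * m) * Xp)) = 0 := by
  have c3 : ∀ X Y Z : Matrix (Fin n) (Fin n) ℂ,
      Matrix.trace (X * Y * Z) = Matrix.trace (Z * X * Y) := fun X Y Z =>
    Matrix.trace_mul_cycle X Y Z
  have expand1 : Matrix.trace ((Xp * m - m * Xp) * a + a * (Xp * m - m * Xp))
      = 2 * Matrix.trace (Xp * m * a) - 2 * Matrix.trace (Xp * a * m) := by
    simp only [Matrix.sub_mul, Matrix.mul_sub, Matrix.trace_add, Matrix.trace_sub]
    have e1 : Matrix.trace (a * (Xp * m)) = Matrix.trace (Xp * m * a) := by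
      rw [Matrix.trace_mul_comm, mul_assoc]
    have e2 : Matrix.trace (m * Xp * a) = Matrix.trace (Xp * a * m) := by
      rw [c3, c3]
    have e3 : Matrix.trace (a * (m * Xp)) = Matrix.trace (Xp * a * m) := by
      rw [← mul_assoc, c3]
    rw [e1, e2, e3]; ring
  have expand2 : Matrix.trace (D * (Xp * (m * a - a * m) - (m * a - a * m) * Xp))
      = Matrix.trace (Xp * m * a) - Matrix.trace (Xp * a * m) := by
    simp only [Matrix.mul_sub, Matrix.sub_mul, Matrix.trace_sub]
    have e1 : Matrix.trace (D * (Xp * (m * a))) = Matrix.trace (D * Xp * (m * a)) := by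
      rw [mul_assoc]
    have e2 : Matrix.trace (D * (Xp * (a * m))) = Matrix.trace (D * Xp * (a * m)) := by
      rw [mul_assoc]
    have e3 : Matrix.trace (D * (m * a * Xp)) = Matrix.trace (Xp * D * (m * a)) := by
      rw [← mul_assoc, c3, mul_assoc]
    have e4 : Matrix.trace (D * (a * m * Xp)) = Matrix.trace (Xp * D * (a * m)) := by
      rw [← mul_assoc, c3, mul_assoc]
    rw [e1, e2, e3, e4]
    have : Matrix.trace (D * Xp * (m * a)) - Matrix.trace (D * Xp * (a * m))
        - (Matrix.trace (Xp * D * (m * a)) - Matrix.trace (Xp * D * (a * m)))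
        = Matrix.trace ((D * Xp - Xp * D) * (m * a))
          - Matrix.trace ((D * Xp - Xp * D) * (a * m)) := by
      simp only [Matrix.sub_mul, Matrix.trace_sub]; ring
    rw [this, hD, ← mul_assoc, ← mul_assoc]
  rw [expand1, expand2]; ring

end Matrices

end Stmt8Aux

open Stmt8Aux

/-- If `[D, X₊] = X₊` and `h` (three times continuously differentiable) satisfies
the Toda equation, then `Θ₊₊ = Tr((h⁻¹∂₊h)²) − 2Tr(D ∂₊(h⁻¹∂₊h))` is chiral:
`∂₋Θ₊₊ = 0`. -/
theorem statement8 {n : ℕ} (hn : 0 < n)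
    (h : ℝ × ℝ → Matrix (Fin n) (Fin n) ℂ)
    (Xp Xm D : Matrix (Fin n) (Fin n) ℂ)
    (hD : D * Xp - Xp * D = Xp)
    (hC3 : ∀ i j, ContDiff ℝ 3 fun p : ℝ × ℝ => h p i j)
    (hinv : ∀ p, IsUnit (h p))
    (htoda : ∀ p : ℝ × ℝ,
      dminus (fun q => (h q)⁻¹ * dplus h q) p
        = Xp * ((h p)⁻¹ * Xm * h p) - (h p)⁻¹ * Xm * h p * Xp)
    (Θ : ℝ × ℝ → ℂ)
    (hΘ : ∀ p : ℝ × ℝ,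
      Θ p = Matrix.trace (((h p)⁻¹ * dplus h p) * ((h p)⁻¹ * dplus h p))
        - 2 * Matrix.trace (D * dplus (fun q => (h q)⁻¹ * dplus h q) p)) :
    ∀ p : ℝ × ℝ, deriv (fun s => Θ (p.1, s)) p.2 = 0 := by
  intro p
  set A : ℝ × ℝ → Matrix (Fin n) (Fin n) ℂ := fun q => (h q)⁻¹ * dplus h q with hA
  set M : ℝ × ℝ → Matrix (Fin n) (Fin n) ℂ := fun q => (h q)⁻¹ * Xm * h q with hM
  set Hi : ℝ × ℝ → Matrix (Fin n) (Fin n) ℂ := fun q => (h q)⁻¹ with hHi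
  -- smoothness bookkeeping
  have hCh : EntCD 3 h := hC3
  have hCinv : EntCD 3 Hi := EntCD.inv hCh hinv
  have hCdp : EntCD 2 (dplus h) := EntCD.dplus hCh
  have hCA : EntCD 2 A := EntCD.mul (hCinv.of_le (by norm_num)) hCdp
  have hCA1 : EntCD 1 A := hCA.of_le (by norm_num)
  have hCh1 : EntCD 1 h := hCh.of_le (by norm_num)
  have hCinv1 : EntCD 1 Hi := hCinv.of_le (by norm_num)
  have hCF1 : EntCD 1 (fun q => Hi q * Xm) := EntCD.mul hCinv1 (EntCD.const 1 Xm)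
  have hCM1 : EntCD 1 M := EntCD.mul hCF1 hCh1
  -- invertibility facts
  have hu1 : ∀ q, Hi q * h q = 1 := fun q =>
    Matrix.nonsing_inv_mul _ ((Matrix.isUnit_iff_isUnit_det _).mp (hinv q))
  have hu2 : ∀ q, h q * Hi q = 1 := fun q =>
    Matrix.mul_nonsing_inv _ ((Matrix.isUnit_iff_isUnit_det _).mp (hinv q))
  -- derivative of the inverse
  have hdHi : ∀ q, dplus Hi q = -(Hi q * dplus h q * Hi q) := by
    intro q
    have h0 : dplus (fun r => Hi r * h r) q = 0 := by
      have e : (fun r => Hi r * h r) = fun _ => (1 : Matrix (Fin n) (Fin n) ℂ) :=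
        funext hu1
      rw [e]; exact dplus_const 1 q
    have h1 := dplus_mul hCinv1 hCh1 q
    rw [h0] at h1
    have h2 : dplus Hi q * h q = -(Hi q * dplus h q) :=
      eq_neg_of_add_eq_zero_left h1.symm
    calc dplus Hi q = dplus Hi q * (h q * Hi q) := by rw [hu2 q, mul_one]
      _ = dplus Hi q * h q * Hi q := by rw [mul_assoc]
      _ = -(Hi q * dplus h q) * Hi q := by rw [h2]
      _ = -(Hi q * dplus h q * Hi q) := by rw [neg_mul]
  -- ∂₊ M = M A - A M
  have hdM : dplus M p = M p * A p - A p * M p := by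
    have e1 : dplus M p = dplus (fun q => Hi q * Xm) p * h p + (Hi p * Xm) * dplus h p :=
      dplus_mul hCF1 hCh1 p
    have e2 : dplus (fun q => Hi q * Xm) p = dplus Hi p * Xm :=
      dplus_mul_const hCinv1 Xm p
    have key1 : (Hi p * Xm) * dplus h p = M p * A p := by
      show Hi p * Xm * dplus h p = ((h p)⁻¹ * Xm * h p) * ((h p)⁻¹ * dplus h p)
      rw [mul_assoc ((h p)⁻¹ * Xm) (h p) _, ← mul_assoc (h p) ((h p)⁻¹) _]
      rw [show h p * (h p)⁻¹ = 1 from hu2 p, one_mul]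
    have key2 : (-(Hi p * dplus h p * Hi p) * Xm) * h p = -(A p * M p) := by
      show (-(Hi p * dplus h p * Hi p) * Xm) * h p
        = -(((h p)⁻¹ * dplus h p) * ((h p)⁻¹ * Xm * h p))
      simp only [neg_mul, hHi, mul_assoc]
    rw [e1, e2, hdHi p, key2, key1, neg_add_eq_sub]
  -- Clairaut on A
  have step_comm : dminus (dplus A) p = dplus (dminus A) p := dminus_dplus_comm hCA p
  -- Toda: the function dminus A
  have e_dmA : dminus A = fun q => Xp * M q - M q * Xp := funext htoda
  have e2 : dplus (dminus A) p = Xp * dplus M p - dplus M p * Xp := by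
    rw [e_dmA]
    rw [dplus_sub (EntCD.mul (EntCD.const 1 Xp) hCM1) (EntCD.mul hCM1 (EntCD.const 1 Xp)) p,
      dplus_const_mul hCM1 Xp p, dplus_mul_const hCM1 Xp p]
  -- derivative of Θ along the second coordinate
  have hCAA : EntCD 1 (fun q => A q * A q) := EntCD.mul hCA1 hCA1
  have hCDdpA : EntCD 1 (fun q => D * dplus A q) :=
    EntCD.mul (EntCD.const 1 D) (EntCD.dplus hCA)
  have H1 := trace_slice2_hasDerivAt hCAA p
  have H2 := trace_slice2_hasDerivAt hCDdpA p
  have eΘ : (fun s => Θ (p.1, s))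
      = fun s => Matrix.trace (A (p.1, s) * A (p.1, s))
          - 2 * Matrix.trace (D * dplus A (p.1, s)) := by
    funext s; exact hΘ (p.1, s)
  have HΘ : HasDerivAt (fun s => Θ (p.1, s))
      (Matrix.trace (dminus (fun q => A q * A q) p)
        - 2 * Matrix.trace (dminus (fun q => D * dplus A q) p)) p.2 := by
    rw [eΘ]; exact H1.sub (H2.const_mul 2)
  rw [HΘ.deriv]
  -- now compute the value
  have v1 : dminus (fun q => A q * A q) p = dminus A p * A p + A p * dminus A p :=
    dminus_mul hCA1 hCA1 p
  have v2 : dminus (fun q => D * dplus A q) p = D * dminus (dplus A) p :=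
    dminus_const_mul (EntCD.dplus hCA) D p
  have v3 : dminus A p = Xp * M p - M p * Xp := htoda p
  rw [v1, v2, step_comm, e2, hdM, v3]
  exact trace_identity (A p) (M p) Xp D hD
end

section
/- Let h : ℝ² → GLₙ(ℂ) have three times continuously differentiable entries, let X₊, X₋, D be fixed n×n complex matrices with [D, X₊] = X₊ and D * h(x) = h(x) * D for all x, and suppose h satisfies the Toda equation ∂₋(h⁻¹ * ∂₊h) = [X₊, h⁻¹ * X₋ * h]. Then the quantity Θ₋₋ := Tr((h⁻¹ * ∂₋h)²) − 2 Tr(D * ∂₋(h⁻¹ * ∂₋h)) is anti-chiral: ∂₊Θ₋₋ = 0. -/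
namespace Statement9Aux

open Matrix

noncomputable def pd1 (f : ℝ × ℝ → ℂ) (p : ℝ × ℝ) : ℂ := deriv (fun s => f (s, p.2)) p.1
noncomputable def pd2 (f : ℝ × ℝ → ℂ) (p : ℝ × ℝ) : ℂ := deriv (fun s => f (p.1, s)) p.2

lemma hasDerivAt_line1 (f : ℝ × ℝ → ℂ) (p : ℝ × ℝ) (hf : DifferentiableAt ℝ f p) :
    HasDerivAt (fun s => f (s, p.2)) (fderiv ℝ f p (1, 0)) p.1 := by
  have hl : HasDerivAt (fun s : ℝ => (s, p.2)) ((1 : ℝ), (0 : ℝ)) p.1 :=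
    (hasDerivAt_id p.1).prodMk (hasDerivAt_const _ _)
  have h2 : HasFDerivAt f (fderiv ℝ f p) ((p.1, p.2) : ℝ × ℝ) := by
    simpa using hf.hasFDerivAt
  exact h2.comp_hasDerivAt p.1 hl

lemma hasDerivAt_line2 (f : ℝ × ℝ → ℂ) (p : ℝ × ℝ) (hf : DifferentiableAt ℝ f p) :
    HasDerivAt (fun s => f (p.1, s)) (fderiv ℝ f p (0, 1)) p.2 := by
  have hl : HasDerivAt (fun s : ℝ => (p.1, s)) ((0 : ℝ), (1 : ℝ)) p.2 :=
    (hasDerivAt_const _ _).prodMk (hasDerivAt_id p.2)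
  have h2 : HasFDerivAt f (fderiv ℝ f p) ((p.1, p.2) : ℝ × ℝ) := by
    simpa using hf.hasFDerivAt
  exact h2.comp_hasDerivAt p.2 hl

lemma pd1_eq (f : ℝ × ℝ → ℂ) (p : ℝ × ℝ) (hf : DifferentiableAt ℝ f p) :
    pd1 f p = fderiv ℝ f p (1, 0) := (hasDerivAt_line1 f p hf).deriv

lemma pd2_eq (f : ℝ × ℝ → ℂ) (p : ℝ × ℝ) (hf : DifferentiableAt ℝ f p) :
    pd2 f p = fderiv ℝ f p (0, 1) := (hasDerivAt_line2 f p hf).deriv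

lemma contDiff_pd1 {k : ℕ} {f : ℝ × ℝ → ℂ} (hf : ContDiff ℝ (k + 1 : ℕ) f) :
    ContDiff ℝ (k : ℕ) (pd1 f) := by
  have hd : ∀ p, DifferentiableAt ℝ f p := fun p =>
    (hf.differentiable (by simp)) p
  have he : pd1 f = fun p => fderiv ℝ f p (1, 0) := funext fun p => pd1_eq f p (hd p)
  rw [he]
  exact (hf.fderiv_right (by exact_mod_cast le_rfl)).clm_apply contDiff_const

lemma contDiff_pd2 {k : ℕ} {f : ℝ × ℝ → ℂ} (hf : ContDiff ℝ (k + 1 : ℕ) f) :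
    ContDiff ℝ (k : ℕ) (pd2 f) := by
  have hd : ∀ p, DifferentiableAt ℝ f p := fun p =>
    (hf.differentiable (by simp)) p
  have he : pd2 f = fun p => fderiv ℝ f p (0, 1) := funext fun p => pd2_eq f p (hd p)
  rw [he]
  exact (hf.fderiv_right (by exact_mod_cast le_rfl)).clm_apply contDiff_const

lemma pd_comm {f : ℝ × ℝ → ℂ} (hf : ContDiff ℝ 2 f) (p : ℝ × ℝ) :
    pd1 (pd2 f) p = pd2 (pd1 f) p := by
  have hd : ∀ q, DifferentiableAt ℝ f q := fun q =>
    (hf.differentiable (by norm_num)) q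
  have hf' : ContDiff ℝ 1 (fderiv ℝ f) := hf.fderiv_right (by norm_num)
  have h2 : pd2 f = fun q => fderiv ℝ f q (0, 1) := funext fun q => pd2_eq f q (hd q)
  have h1 : pd1 f = fun q => fderiv ℝ f q (1, 0) := funext fun q => pd1_eq f q (hd q)
  have hdf : ∀ q, DifferentiableAt ℝ (fderiv ℝ f) q := fun q => (hf'.differentiable one_ne_zero) q
  have e1 : pd1 (pd2 f) p = (fderiv ℝ (fderiv ℝ f) p (1, 0)) (0, 1) := by
    rw [h2, pd1_eq _ _ ((hdf p).clm_apply (differentiableAt_const _)),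
      fderiv_clm_apply (hdf p) (differentiableAt_const _)]
    simp
  have e2 : pd2 (pd1 f) p = (fderiv ℝ (fderiv ℝ f) p (0, 1)) (1, 0) := by
    rw [h1, pd2_eq _ _ ((hdf p).clm_apply (differentiableAt_const _)),
      fderiv_clm_apply (hdf p) (differentiableAt_const _)]
    simp
  rw [e1, e2]
  exact second_derivative_symmetric (fun y => (hd y).hasFDerivAt) (hdf p).hasFDerivAt _ _

/-- entries are C^k -/
def MC {n : ℕ} (k : ℕ) (F : ℝ × ℝ → Matrix (Fin n) (Fin n) ℂ) : Prop :=
  ∀ i j, ContDiff ℝ (k : ℕ) fun p => F p i j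

lemma MC.of_le {n k l : ℕ} {F : ℝ × ℝ → Matrix (Fin n) (Fin n) ℂ} (h : MC k F) (hl : l ≤ k) :
    MC l F := fun i j => (h i j).of_le (by exact_mod_cast hl)

lemma MC.const {n : ℕ} (k : ℕ) (C : Matrix (Fin n) (Fin n) ℂ) : MC k (fun _ => C) :=
  fun _ _ => contDiff_const

lemma MC.mul {n k : ℕ} {F G : ℝ × ℝ → Matrix (Fin n) (Fin n) ℂ} (hF : MC k F) (hG : MC k G) :
    MC k (fun p => F p * G p) := by
  intro i j
  have he : (fun p => (F p * G p) i j) = fun p => ∑ l, F p i l * G p l j := by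
    funext p; simp [Matrix.mul_apply]
  rw [he]
  exact ContDiff.sum fun l _ => (hF i l).mul (hG l j)

lemma contDiff_finset_prod {ι : Type*} [DecidableEq ι] {k : ℕ} (s : Finset ι)
    (f : ι → (ℝ × ℝ) → ℂ) (hf : ∀ i ∈ s, ContDiff ℝ (k : ℕ) (f i)) :
    ContDiff ℝ (k : ℕ) (fun p => ∏ i ∈ s, f i p) := by
  induction s using Finset.cons_induction with
  | empty => simpa using contDiff_const
  | cons a s ha ih =>
    simp only [Finset.prod_cons]
    exact (hf a (Finset.mem_cons_self a s)).mul
      (ih fun i hi => hf i (Finset.mem_cons_of_mem hi))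

lemma MC.det {n k : ℕ} {F : ℝ × ℝ → Matrix (Fin n) (Fin n) ℂ} (hF : MC k F) :
    ContDiff ℝ (k : ℕ) (fun p => (F p).det) := by
  have he : (fun p => (F p).det)
      = fun p => ∑ σ : Equiv.Perm (Fin n), (Equiv.Perm.sign σ : ℂ) * ∏ i, F p (σ i) i := by
    funext p; rw [Matrix.det_apply']
  rw [he]
  exact ContDiff.sum fun σ _ =>
    contDiff_const.mul (contDiff_finset_prod _ _ fun i _ => hF (σ i) i)

lemma MC.adjugate {n k : ℕ} {F : ℝ × ℝ → Matrix (Fin n) (Fin n) ℂ} (hF : MC k F) :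
    MC k (fun p => (F p).adjugate) := by
  intro i j
  have he : (fun p => (F p).adjugate i j)
      = fun p => ((F p).updateRow j (Pi.single i 1)).det := by
    funext p; rw [Matrix.adjugate_apply]
  rw [he]
  exact MC.det (fun a b => by
    by_cases hab : a = j
    · simp only [Matrix.updateRow_apply, hab, if_pos rfl]; exact contDiff_const
    · simp only [Matrix.updateRow_apply, if_neg hab]; exact hF a b)

lemma MC.inv {n k : ℕ} {h : ℝ × ℝ → Matrix (Fin n) (Fin n) ℂ} (hF : MC k h)
    (hinv : ∀ p, IsUnit (h p)) : MC k (fun p => (h p)⁻¹) := by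
  intro i j
  have hdet : ∀ p, (h p).det ≠ 0 := fun p =>
    IsUnit.ne_zero ((Matrix.isUnit_iff_isUnit_det (h p)).1 (hinv p))
  have he : (fun p => (h p)⁻¹ i j) = fun p => ((h p).det)⁻¹ * (h p).adjugate i j := by
    funext p
    rw [Matrix.inv_def, Matrix.smul_apply, Ring.inverse_eq_inv, smul_eq_mul]
  rw [he]
  have h1 : ContDiff ℝ (k : ℕ) fun p => ((h p).det)⁻¹ := by
    rw [contDiff_iff_contDiffAt]
    intro p
    exact (contDiffAt_inv ℝ (hdet p)).comp p (MC.det hF).contDiffAt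
  exact h1.mul (MC.adjugate hF i j)

variable {n : ℕ} {F G : ℝ × ℝ → Matrix (Fin n) (Fin n) ℂ}

lemma MC.entry_hasDerivAt1 (hF : MC 1 F) (p : ℝ × ℝ) (i j : Fin n) :
    HasDerivAt (fun s => F (s, p.2) i j) (dplus F p i j) p.1 := by
  have hd : DifferentiableAt ℝ (fun q => F q i j) p :=
    ((hF i j).differentiable (by simp)) p
  exact (hasDerivAt_line1 _ p hd).differentiableAt.hasDerivAt

lemma MC.entry_hasDerivAt2 (hF : MC 1 F) (p : ℝ × ℝ) (i j : Fin n) :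
    HasDerivAt (fun s => F (p.1, s) i j) (dminus F p i j) p.2 := by
  have hd : DifferentiableAt ℝ (fun q => F q i j) p :=
    ((hF i j).differentiable (by simp)) p
  exact (hasDerivAt_line2 _ p hd).differentiableAt.hasDerivAt

lemma MC.dplus {k : ℕ} (hF : MC (k + 1) F) : MC k (dplus F) :=
  fun i j => contDiff_pd1 (hF i j)

lemma MC.dminus {k : ℕ} (hF : MC (k + 1) F) : MC k (dminus F) :=
  fun i j => contDiff_pd2 (hF i j)

lemma dplus_mul (hF : MC 1 F) (hG : MC 1 G) (p : ℝ × ℝ) :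
    dplus (fun q => F q * G q) p = dplus F p * G p + F p * dplus G p := by
  ext i j
  have hs : HasDerivAt (fun s => (F (s, p.2) * G (s, p.2)) i j)
      (∑ l, (dplus F p i l * G p l j + F p i l * dplus G p l j)) p.1 := by
    have he : (fun s => (F (s, p.2) * G (s, p.2)) i j)
        = fun s => ∑ l, F (s, p.2) i l * G (s, p.2) l j := by
      funext s; simp [Matrix.mul_apply]
    rw [he]
    exact HasDerivAt.fun_sum fun l _ =>
      (hF.entry_hasDerivAt1 p i l).fun_mul (hG.entry_hasDerivAt1 p l j)
  have h2 := hs.deriv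
  show deriv (fun s => (F (s, p.2) * G (s, p.2)) i j) p.1 = _
  rw [h2]
  simp [Matrix.add_apply, Matrix.mul_apply, Finset.sum_add_distrib]

lemma dminus_mul (hF : MC 1 F) (hG : MC 1 G) (p : ℝ × ℝ) :
    dminus (fun q => F q * G q) p = dminus F p * G p + F p * dminus G p := by
  ext i j
  have hs : HasDerivAt (fun s => (F (p.1, s) * G (p.1, s)) i j)
      (∑ l, (dminus F p i l * G p l j + F p i l * dminus G p l j)) p.2 := by
    have he : (fun s => (F (p.1, s) * G (p.1, s)) i j)
        = fun s => ∑ l, F (p.1, s) i l * G (p.1, s) l j := by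
      funext s; simp [Matrix.mul_apply]
    rw [he]
    exact HasDerivAt.fun_sum fun l _ =>
      (hF.entry_hasDerivAt2 p i l).fun_mul (hG.entry_hasDerivAt2 p l j)
  have h2 := hs.deriv
  show deriv (fun s => (F (p.1, s) * G (p.1, s)) i j) p.2 = _
  rw [h2]
  simp [Matrix.add_apply, Matrix.mul_apply, Finset.sum_add_distrib]

lemma dplus_const (C : Matrix (Fin n) (Fin n) ℂ) (p : ℝ × ℝ) :
    dplus (fun _ => C) p = 0 := by
  ext i j; show deriv (fun _ => C i j) p.1 = 0; simp

lemma dminus_const (C : Matrix (Fin n) (Fin n) ℂ) (p : ℝ × ℝ) :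
    dminus (fun _ => C) p = 0 := by
  ext i j; show deriv (fun _ => C i j) p.2 = 0; simp

lemma dminus_sub (hF : MC 1 F) (hG : MC 1 G) (p : ℝ × ℝ) :
    dminus (fun q => F q - G q) p = dminus F p - dminus G p := by
  ext i j
  have hs := ((hF.entry_hasDerivAt2 p i j).fun_sub (hG.entry_hasDerivAt2 p i j)).deriv
  show deriv (fun s => (F (p.1, s) - G (p.1, s)) i j) p.2 = _
  simpa [Matrix.sub_apply] using hs

lemma dminus_add (hF : MC 1 F) (hG : MC 1 G) (p : ℝ × ℝ) :
    dminus (fun q => F q + G q) p = dminus F p + dminus G p := by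
  ext i j
  have hs := ((hF.entry_hasDerivAt2 p i j).fun_add (hG.entry_hasDerivAt2 p i j)).deriv
  show deriv (fun s => (F (p.1, s) + G (p.1, s)) i j) p.2 = _
  simpa [Matrix.add_apply] using hs

lemma dpm_comm (hF : MC 2 F) (p : ℝ × ℝ) :
    dplus (dminus F) p = dminus (dplus F) p := by
  ext i j
  exact pd_comm (by exact_mod_cast hF i j) p

lemma dplus_const_mul (hF : MC 1 F) (C : Matrix (Fin n) (Fin n) ℂ) (p : ℝ × ℝ) :
    dplus (fun q => C * F q) p = C * dplus F p := by
  have := dplus_mul (MC.const 1 C) hF p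
  simpa [dplus_const] using this

lemma dplus_mul_const (hF : MC 1 F) (C : Matrix (Fin n) (Fin n) ℂ) (p : ℝ × ℝ) :
    dplus (fun q => F q * C) p = dplus F p * C := by
  have := dplus_mul hF (MC.const 1 C) p
  simpa [dplus_const] using this

lemma dminus_const_mul (hF : MC 1 F) (C : Matrix (Fin n) (Fin n) ℂ) (p : ℝ × ℝ) :
    dminus (fun q => C * F q) p = C * dminus F p := by
  have := dminus_mul (MC.const 1 C) hF p
  simpa [dminus_const] using this

lemma dminus_mul_const (hF : MC 1 F) (C : Matrix (Fin n) (Fin n) ℂ) (p : ℝ × ℝ) :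
    dminus (fun q => F q * C) p = dminus F p * C := by
  have := dminus_mul hF (MC.const 1 C) p
  simpa [dminus_const] using this

lemma hasDerivAt_trace1 (hF : MC 1 F) (p : ℝ × ℝ) :
    HasDerivAt (fun s => (F (s, p.2)).trace) ((dplus F p).trace) p.1 := by
  have he : (fun s => (F (s, p.2)).trace) = fun s => ∑ i, F (s, p.2) i i := by
    funext s; rfl
  have he2 : (dplus F p).trace = ∑ i, dplus F p i i := rfl
  rw [he, he2]
  exact HasDerivAt.fun_sum fun i _ => hF.entry_hasDerivAt1 p i i

lemma tr3 (X Y Z : Matrix (Fin n) (Fin n) ℂ) :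
    (X * (Y * Z)).trace = (Y * (Z * X)).trace := by
  rw [Matrix.trace_mul_comm, mul_assoc]

lemma trDcomm (D X Y : Matrix (Fin n) (Fin n) ℂ) (hc : D * X = X * D) :
    (D * (X * Y - Y * X)).trace = 0 := by
  have h1 : D * (X * Y) = X * (D * Y) := by rw [← mul_assoc, hc, mul_assoc]
  have h2 : (X * (D * Y)).trace = (D * (Y * X)).trace := by
    rw [tr3 X D Y, tr3 D Y X]
  rw [mul_sub, Matrix.trace_sub, h1, h2, sub_self]


lemma MC.sub {n k : ℕ} {F G : ℝ × ℝ → Matrix (Fin n) (Fin n) ℂ} (hF : MC k F) (hG : MC k G) :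
    MC k (fun p => F p - G p) := by
  intro i j
  have he : (fun p => (F p - G p) i j) = fun p => F p i j - G p i j := by
    funext p; simp [Matrix.sub_apply]
  rw [he]
  exact (hF i j).sub (hG i j)

lemma trD {n : ℕ} (d xp N : Matrix (Fin n) (Fin n) ℂ) (hD : d * xp - xp * d = xp) :
    (d * (xp * N - N * xp)).trace = (xp * N).trace := by
  have h1 : (d * (N * xp)).trace = ((xp * d) * N).trace := by
    rw [tr3 d N xp, Matrix.trace_mul_comm]
  have h2 : d * (xp * N) = (d * xp) * N := by rw [mul_assoc]
  rw [mul_sub, Matrix.trace_sub, h1, h2, ← Matrix.trace_sub, ← sub_mul, hD]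

lemma trace_final {n : ℕ} (a b m dmb dma xp d : Matrix (Fin n) (Fin n) ℂ)
    (hD : d * xp - xp * d = xp)
    (cb : d * b = b * d) (cdmb : d * dmb = dmb * d) :
    Matrix.trace ((xp * m - m * xp + (b * a - a * b)) * b
        + b * (xp * m - m * xp + (b * a - a * b)))
      - 2 * Matrix.trace (d * ((xp * (m * b - b * m) - (m * b - b * m) * xp)
        + ((dmb * a + b * dma) - (dma * b + a * dmb)))) = 0 := by
  set dpb := xp * m - m * xp + (b * a - a * b) with hdpb
  have s1 : Matrix.trace (dpb * b + b * dpb) = 2 * Matrix.trace (b * dpb) := by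
    rw [Matrix.trace_add, Matrix.trace_mul_comm]; ring
  have s2 : b * dpb = (b * (xp * m) - b * (m * xp)) + (b * (b * a) - b * (a * b)) := by
    rw [hdpb]; noncomm_ring
  have s3 : Matrix.trace (b * dpb)
      = Matrix.trace (b * (xp * m)) - Matrix.trace (b * (m * xp)) := by
    rw [s2, Matrix.trace_add, Matrix.trace_sub, Matrix.trace_sub, tr3 b b a]
    ring
  have s4 : d * ((xp * (m * b - b * m) - (m * b - b * m) * xp)
        + ((dmb * a + b * dma) - (dma * b + a * dmb)))
      = d * (xp * (m * b - b * m) - (m * b - b * m) * xp)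
        + (d * (dmb * a - a * dmb) + d * (b * dma - dma * b)) := by
    noncomm_ring
  have s5 : Matrix.trace (d * ((xp * (m * b - b * m) - (m * b - b * m) * xp)
        + ((dmb * a + b * dma) - (dma * b + a * dmb))))
      = Matrix.trace (xp * (m * b - b * m)) := by
    rw [s4, Matrix.trace_add, Matrix.trace_add, trD d xp (m * b - b * m) hD,
      trDcomm d dmb a cdmb, trDcomm d b dma cb]
    ring
  have s6 : xp * (m * b - b * m) = xp * (m * b) - xp * (b * m) := by noncomm_ring
  rw [s1, s3, s5, s6, Matrix.trace_sub, tr3 b xp m, tr3 xp b m]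
  ring

end Statement9Aux

open Statement9Aux Matrix in
/-- If `[D, X₊] = X₊`, `D` commutes with `h` everywhere, and `h` (three times
continuously differentiable) satisfies the Toda equation, then
`Θ₋₋ = Tr((h⁻¹∂₋h)²) − 2Tr(D ∂₋(h⁻¹∂₋h))` is anti-chiral: `∂₊Θ₋₋ = 0`. -/
theorem statement9 {n : ℕ} (hn : 0 < n)
    (h : ℝ × ℝ → Matrix (Fin n) (Fin n) ℂ)
    (Xp Xm D : Matrix (Fin n) (Fin n) ℂ)
    (hD : D * Xp - Xp * D = Xp)
    (hcomm : ∀ p, D * h p = h p * D)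
    (hC3 : ∀ i j, ContDiff ℝ 3 fun p : ℝ × ℝ => h p i j)
    (hinv : ∀ p, IsUnit (h p))
    (htoda : ∀ p : ℝ × ℝ,
      dminus (fun q => (h q)⁻¹ * dplus h q) p
        = Xp * ((h p)⁻¹ * Xm * h p) - (h p)⁻¹ * Xm * h p * Xp)
    (Θ : ℝ × ℝ → ℂ)
    (hΘ : ∀ p : ℝ × ℝ,
      Θ p = Matrix.trace (((h p)⁻¹ * dminus h p) * ((h p)⁻¹ * dminus h p))
        - 2 * Matrix.trace (D * dminus (fun q => (h q)⁻¹ * dminus h q) p)) :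
    ∀ p : ℝ × ℝ, deriv (fun s => Θ (s, p.2)) p.1 = 0 := by
  classical
  -- abbreviations
  set Hi : ℝ × ℝ → Matrix (Fin n) (Fin n) ℂ := fun q => (h q)⁻¹ with hHi
  set A : ℝ × ℝ → Matrix (Fin n) (Fin n) ℂ := fun q => Hi q * dplus h q with hA
  set B : ℝ × ℝ → Matrix (Fin n) (Fin n) ℂ := fun q => Hi q * dminus h q with hB
  set M : ℝ × ℝ → Matrix (Fin n) (Fin n) ℂ := fun q => Hi q * Xm * h q with hM
  -- smoothness bookkeeping
  have mh : MC 3 h := fun i j => by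
    have e : ((3 : ℕ) : WithTop ℕ∞) = 3 := by norm_cast
    rw [e]; exact hC3 i j
  have mHi : MC 3 Hi := MC.inv mh hinv
  have mdph : MC 2 (dplus h) := MC.dplus mh
  have mdmh : MC 2 (dminus h) := MC.dminus mh
  have mA : MC 2 A := (mHi.of_le (by norm_num)).mul mdph
  have mB : MC 2 B := (mHi.of_le (by norm_num)).mul mdmh
  have mM : MC 3 M := ((mHi.mul (MC.const 3 Xm))).mul mh
  have mdmB : MC 1 (dminus B) := MC.dminus mB
  have mdpB : MC 1 (dplus B) := MC.dplus mB
  have mdmA : MC 1 (dminus A) := MC.dminus mA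
  -- unit facts
  have hu : ∀ q, IsUnit (h q).det := fun q => (Matrix.isUnit_iff_isUnit_det (h q)).1 (hinv q)
  have hl : ∀ q, Hi q * h q = 1 := fun q => Matrix.nonsing_inv_mul _ (hu q)
  have hr : ∀ q, h q * Hi q = 1 := fun q => Matrix.mul_nonsing_inv _ (hu q)
  -- derivative of the inverse
  have idp : ∀ q, dplus Hi q = -(Hi q * dplus h q * Hi q) := by
    intro q
    have h1 := dplus_mul (mHi.of_le (by norm_num)) (mh.of_le (by norm_num)) q
    have h0 : dplus (fun r => Hi r * h r) q = 0 := by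
      have he : (fun r => Hi r * h r) = fun _ => (1 : Matrix (Fin n) (Fin n) ℂ) :=
        funext fun r => hl r
      rw [he, dplus_const]
    rw [h0] at h1
    have h2 : dplus Hi q * h q = -(Hi q * dplus h q) := by
      have := h1.symm
      linear_combination (norm := noncomm_ring) this
    calc dplus Hi q = dplus Hi q * (h q * Hi q) := by rw [hr, mul_one]
      _ = (dplus Hi q * h q) * Hi q := by rw [mul_assoc]
      _ = -(Hi q * dplus h q) * Hi q := by rw [h2]
      _ = -(Hi q * dplus h q * Hi q) := by noncomm_ring
  have idm : ∀ q, dminus Hi q = -(Hi q * dminus h q * Hi q) := by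
    intro q
    have h1 := dminus_mul (mHi.of_le (by norm_num)) (mh.of_le (by norm_num)) q
    have h0 : dminus (fun r => Hi r * h r) q = 0 := by
      have he : (fun r => Hi r * h r) = fun _ => (1 : Matrix (Fin n) (Fin n) ℂ) :=
        funext fun r => hl r
      rw [he, dminus_const]
    rw [h0] at h1
    have h2 : dminus Hi q * h q = -(Hi q * dminus h q) := by
      have := h1.symm
      linear_combination (norm := noncomm_ring) this
    calc dminus Hi q = dminus Hi q * (h q * Hi q) := by rw [hr, mul_one]
      _ = (dminus Hi q * h q) * Hi q := by rw [mul_assoc]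
      _ = -(Hi q * dminus h q) * Hi q := by rw [h2]
      _ = -(Hi q * dminus h q * Hi q) := by noncomm_ring
  -- the key zero-curvature identity (†)
  have dagger : ∀ q, dplus B q = Xp * M q - M q * Xp + (B q * A q - A q * B q) := by
    intro q
    have e1 : dplus B q = dplus Hi q * dminus h q + Hi q * dplus (dminus h) q :=
      dplus_mul (mHi.of_le (by norm_num)) (mdmh.of_le (by norm_num)) q
    have e2 : dminus A q = dminus Hi q * dplus h q + Hi q * dminus (dplus h) q :=
      dminus_mul (mHi.of_le (by norm_num)) (mdph.of_le (by norm_num)) q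
    have e3 : dplus (dminus h) q = dminus (dplus h) q := dpm_comm (mh.of_le (by norm_num)) q
    have e4 : Hi q * dminus (dplus h) q
        = dminus A q + (Hi q * dminus h q * Hi q) * dplus h q := by
      rw [e2, idm q]; noncomm_ring
    have e5 := htoda q
    rw [e1, e3, e4, idp q, e5]
    show -(Hi q * dplus h q * Hi q) * dminus h q
        + (Xp * (Hi q * Xm * h q) - Hi q * Xm * h q * Xp
          + Hi q * dminus h q * Hi q * dplus h q)
      = Xp * (Hi q * Xm * h q) - Hi q * Xm * h q * Xp
        + (Hi q * dminus h q * (Hi q * dplus h q) - Hi q * dplus h q * (Hi q * dminus h q))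
    noncomm_ring
  -- derivative of M
  have dmM : ∀ q, dminus M q = M q * B q - B q * M q := by
    intro q
    have e1 : dminus M q = dminus (fun r => Hi r * Xm) q * h q
        + (Hi q * Xm) * dminus h q :=
      dminus_mul ((mHi.mul (MC.const 3 Xm)).of_le (by norm_num)) (mh.of_le (by norm_num)) q
    have e2 : dminus (fun r => Hi r * Xm) q = dminus Hi q * Xm :=
      dminus_mul_const (mHi.of_le (by norm_num)) Xm q
    have e3 : (Hi q * Xm * h q) * (Hi q * dminus h q) = Hi q * Xm * dminus h q := by
      rw [mul_assoc (Hi q * Xm), ← mul_assoc (h q), hr, one_mul]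
    rw [e1, e2, idm q]
    show -(Hi q * dminus h q * Hi q) * Xm * h q + Hi q * Xm * dminus h q
      = Hi q * Xm * h q * (Hi q * dminus h q) - Hi q * dminus h q * (Hi q * Xm * h q)
    rw [e3]
    noncomm_ring
  -- commutation of D with everything built from h
  have cHi : ∀ q, D * Hi q = Hi q * D := by
    intro q
    calc D * Hi q = (Hi q * h q) * (D * Hi q) := by rw [hl, one_mul]
      _ = Hi q * ((h q * D) * Hi q) := by noncomm_ring
      _ = Hi q * ((D * h q) * Hi q) := by rw [hcomm q]
      _ = (Hi q * D) * (h q * Hi q) := by noncomm_ring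
      _ = Hi q * D := by rw [hr, mul_one]
  have cdm : ∀ q, D * dminus h q = dminus h q * D := by
    intro q
    have h1 : (fun r => D * h r) = fun r => h r * D := funext hcomm
    calc D * dminus h q = dminus (fun r => D * h r) q :=
          (dminus_const_mul (mh.of_le (by norm_num)) D q).symm
      _ = dminus (fun r => h r * D) q := by rw [h1]
      _ = dminus h q * D := dminus_mul_const (mh.of_le (by norm_num)) D q
  have cdp : ∀ q, D * dplus h q = dplus h q * D := by
    intro q
    have h1 : (fun r => D * h r) = fun r => h r * D := funext hcomm
    calc D * dplus h q = dplus (fun r => D * h r) q :=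
          (dplus_const_mul (mh.of_le (by norm_num)) D q).symm
      _ = dplus (fun r => h r * D) q := by rw [h1]
      _ = dplus h q * D := dplus_mul_const (mh.of_le (by norm_num)) D q
  have cB : ∀ q, D * B q = B q * D := by
    intro q
    calc D * (Hi q * dminus h q) = (D * Hi q) * dminus h q := by rw [mul_assoc]
      _ = Hi q * (D * dminus h q) := by rw [cHi q, mul_assoc]
      _ = Hi q * dminus h q * D := by rw [cdm q, mul_assoc]
  have cA : ∀ q, D * A q = A q * D := by
    intro q
    calc D * (Hi q * dplus h q) = (D * Hi q) * dplus h q := by rw [mul_assoc]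
      _ = Hi q * (D * dplus h q) := by rw [cHi q, mul_assoc]
      _ = Hi q * dplus h q * D := by rw [cdp q, mul_assoc]
  have cdmB : ∀ q, D * dminus B q = dminus B q * D := by
    intro q
    have h1 : (fun r => D * B r) = fun r => B r * D := funext cB
    calc D * dminus B q = dminus (fun r => D * B r) q :=
          (dminus_const_mul (mB.of_le (by norm_num)) D q).symm
      _ = dminus (fun r => B r * D) q := by rw [h1]
      _ = dminus B q * D := dminus_mul_const (mB.of_le (by norm_num)) D q
  have cdmA : ∀ q, D * dminus A q = dminus A q * D := by
    intro q
    have h1 : (fun r => D * A r) = fun r => A r * D := funext cA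
    calc D * dminus A q = dminus (fun r => D * A r) q :=
          (dminus_const_mul (mA.of_le (by norm_num)) D q).symm
      _ = dminus (fun r => A r * D) q := by rw [h1]
      _ = dminus A q * D := dminus_mul_const (mA.of_le (by norm_num)) D q
  -- ∂₋ of ∂₊B via (†)
  intro p
  have mT1 : MC 1 (fun q => Xp * M q) := (MC.const 1 Xp).mul (mM.of_le (by norm_num))
  have mT2 : MC 1 (fun q => M q * Xp) := (mM.of_le (by norm_num)).mul (MC.const 1 Xp)
  have mT3 : MC 1 (fun q => B q * A q) := (mB.of_le (by norm_num)).mul (mA.of_le (by norm_num))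
  have mT4 : MC 1 (fun q => A q * B q) := (mA.of_le (by norm_num)).mul (mB.of_le (by norm_num))
  have dmdpB : dminus (dplus B) p
      = (Xp * dminus M p - dminus M p * Xp)
        + ((dminus B p * A p + B p * dminus A p) - (dminus A p * B p + A p * dminus B p)) := by
    have hfe : dplus B = fun q => (Xp * M q - M q * Xp) + (B q * A q - A q * B q) :=
      funext dagger
    rw [hfe,
      dminus_add (F := fun q => Xp * M q - M q * Xp)
        (G := fun q => B q * A q - A q * B q) (mT1.sub mT2) (mT3.sub mT4) p,
      dminus_sub mT1 mT2 p, dminus_sub mT3 mT4 p,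
      dminus_const_mul (mM.of_le (by norm_num)) Xp p,
      dminus_mul_const (mM.of_le (by norm_num)) Xp p,
      dminus_mul (mB.of_le (by norm_num)) (mA.of_le (by norm_num)) p,
      dminus_mul (mA.of_le (by norm_num)) (mB.of_le (by norm_num)) p]
  -- rewrite Θ
  have hG : Θ = fun q => Matrix.trace (B q * B q) - 2 * Matrix.trace (D * dminus B q) := by
    funext q
    rw [hΘ q]
  rw [hG]
  have h1 := hasDerivAt_trace1 (F := fun q => B q * B q)
    ((mB.of_le (by norm_num)).mul (mB.of_le (by norm_num))) p
  have h2 := hasDerivAt_trace1 (F := fun q => D * dminus B q) ((MC.const 1 D).mul mdmB) p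
  have htot := h1.fun_sub (HasDerivAt.const_mul (2 : ℂ) h2)
  rw [htot.deriv]
  have eA : dplus (fun q => B q * B q) p = dplus B p * B p + B p * dplus B p :=
    dplus_mul (mB.of_le (by norm_num)) (mB.of_le (by norm_num)) p
  have eB : dplus (fun q => D * dminus B q) p = D * dplus (dminus B) p :=
    dplus_const_mul mdmB D p
  have eC : dplus (dminus B) p = dminus (dplus B) p := dpm_comm mB p
  rw [eA, eB, eC, dmdpB, dagger p, dmM p]
  exact trace_final (A p) (B p) (M p) (dminus B p) (dminus A p) Xp D hD (cB p) (cdmB p)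
end

section
/- Let A, F be n×n complex matrices and a ∈ ℂ with [A, F] = a • F. Then for every Q ∈ ℂ, exp(A) * exp(Q • F) * exp(−A) = exp((Q * exp a) • F). In particular conjugation of exp(QF) by exp(A) rescales the parameter Q by e^a. -/
open NormedSpace

attribute [local instance] Matrix.linftyOpNormedRing Matrix.linftyOpNormedAlgebra

private lemma semiconj_pow {n : ℕ} (A F B : Matrix (Fin n) (Fin n) ℂ)
    (h : A * F = F * B) : ∀ k : ℕ, A ^ k * F = F * B ^ k := by
  intro k
  induction k with
  | zero => simp
  | succ k ih =>
    rw [pow_succ, pow_succ, mul_assoc, h, ← mul_assoc, ih, mul_assoc]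

private lemma exp_semiconj {n : ℕ} (A F B : Matrix (Fin n) (Fin n) ℂ)
    (h : A * F = F * B) : exp A * F = F * exp B := by
  simp only [exp_eq_tsum ℂ]
  erw [← (expSeries_summable' (𝕂 := ℂ) A).tsum_mul_right,
    ← (expSeries_summable' (𝕂 := ℂ) B).tsum_mul_left]
  congr 1
  funext k
  rw [smul_mul_assoc, mul_smul_comm, semiconj_pow A F B h k]

open NormedSpace in
/-- If `[A, F] = a • F`, then `exp(A) exp(Q•F) exp(−A) = exp((Q e^a) • F)` for all `Q`:
conjugating `exp(QF)` by `exp(A)` rescales `Q` by `e^a`. -/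
theorem statement11 {n : ℕ} (hn : 0 < n)
    (A F : Matrix (Fin n) (Fin n) ℂ) (a : ℂ)
    (hAF : A * F - F * A = a • F) :
    ∀ Q : ℂ,
      exp A * exp (Q • F) * exp (-A)
        = exp ((Q * Complex.exp a) • F) := by
  intro Q
  have hU : IsUnit (exp A) := Matrix.isUnit_exp A
  have key : exp A * F * (exp A)⁻¹ = Complex.exp a • F := by
    have h1 : A * F = F * (A + a • 1) := by
      have := hAF
      rw [sub_eq_iff_eq_add] at this
      rw [this, mul_add, Matrix.mul_smul, mul_one, add_comm]
    have h2 : exp A * F = F * exp (A + a • (1 : Matrix (Fin n) (Fin n) ℂ)) :=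
      exp_semiconj A F _ h1
    have h3 : exp (A + a • (1 : Matrix (Fin n) (Fin n) ℂ))
        = Complex.exp a • exp A := by
      rw [Matrix.exp_add_of_commute _ _ (Commute.smul_right (Commute.one_right A) a)]
      have : (a • (1 : Matrix (Fin n) (Fin n) ℂ)) = algebraMap ℂ _ a := by
        simp [Algebra.algebraMap_eq_smul_one]
      erw [this, ← algebraMap_exp_comm, Complex.exp_eq_exp_ℂ,
        Algebra.algebraMap_eq_smul_one, mul_smul_comm, mul_one]
    rw [h2, h3, mul_smul_comm, smul_mul_assoc, mul_assoc,
      Matrix.mul_nonsing_inv _ ((Matrix.isUnit_iff_isUnit_det _).mp hU), mul_one]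
  calc exp A * exp (Q • F) * exp (-A)
      = exp A * exp (Q • F) * (exp A)⁻¹ := by rw [Matrix.exp_neg]
    _ = exp (exp A * (Q • F) * (exp A)⁻¹) := (Matrix.exp_conj _ _ hU).symm
    _ = exp ((Q * Complex.exp a) • F) := by
        congr 1
        rw [mul_smul_comm, smul_mul_assoc, key, smul_smul]
end

section
/- Let L be a finite-dimensional Lie algebra over a field K with a nondegenerate invariant symmetric bilinear form B (invariance: B(⁅z,x⁆, y) + B(x, ⁅z,y⁆) = 0 for all x, y, z), and let V be a finite-dimensional L-module with action ρ : L → End(V) a Lie algebra homomorphism. Fix X ∈ L and n ∈ ℕ, and suppose c ∈ L satisfies B(c, z) = trace(ρ(X)ⁿ ∘ ρ(z)) for all z ∈ L. Then ⁅X, c⁆ = 0 and, for every y ∈ L with ⁅y, X⁆ = 0, one has ⁅y, c⁆ = 0; that is, c lies in the centre of the centralizer of X in L. -/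
attribute [local instance 100] LieRing.ofAssociativeRing

/-- Let `B` be a nondegenerate invariant symmetric bilinear form on a
finite-dimensional Lie algebra `L`, `ρ : L → End(V)` a finite-dimensional
representation, and suppose `c` satisfies `B(c, z) = tr(ρ(X)ⁿ ρ(z))` for all `z`.
Then `c` lies in the centre of the centralizer of `X`: `⁅X, c⁆ = 0` and
`⁅y, c⁆ = 0` for every `y` with `⁅y, X⁆ = 0`. -/
theorem statement13 {K L V : Type*} [Field K]
    [LieRing L] [LieAlgebra K L] [Module.Finite K L]
    [AddCommGroup V] [Module K V] [Module.Finite K V]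
    (B : L →ₗ[K] L →ₗ[K] K)
    (hsymm : ∀ x y : L, B x y = B y x)
    (hinv : ∀ x y z : L, B ⁅z, x⁆ y + B x ⁅z, y⁆ = 0)
    (hnd : ∀ c : L, (∀ z : L, B c z = 0) → c = 0)
    (ρ : L →ₗ⁅K⁆ Module.End K V)
    (X c : L) (n : ℕ)
    (hc : ∀ z : L, B c z = LinearMap.trace K V ((ρ X) ^ n * ρ z)) :
    ⁅X, c⁆ = 0 ∧ ∀ y : L, ⁅y, X⁆ = 0 → ⁅y, c⁆ = 0 := by
  have key : ∀ y : L, ⁅y, X⁆ = 0 → ⁅y, c⁆ = 0 := by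
    intro y hy
    apply hnd
    intro z
    have hcomm : ρ y * ρ X = ρ X * ρ y := by
      have h0 : ⁅ρ y, ρ X⁆ = 0 := by rw [← LieHom.map_lie, hy, map_zero]
      rw [Ring.lie_def] at h0
      exact sub_eq_zero.mp h0
    have hcommn : (ρ X) ^ n * ρ y = ρ y * (ρ X) ^ n :=
      ((show Commute (ρ y) (ρ X) from hcomm).pow_right n).symm
    have h1 : B ⁅y, c⁆ z = - B c ⁅y, z⁆ := by
      have := hinv c z y; linear_combination this
    rw [h1, hc]
    have h2 : (ρ X) ^ n * ρ ⁅y, z⁆ =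
        (ρ X) ^ n * (ρ y * ρ z) - ((ρ X) ^ n * ρ z) * ρ y := by
      rw [LieHom.map_lie, Ring.lie_def, mul_sub, mul_assoc]
    rw [h2, map_sub]
    have t1 : LinearMap.trace K V (((ρ X) ^ n * ρ z) * ρ y) =
        LinearMap.trace K V ((ρ X) ^ n * (ρ y * ρ z)) := by
      rw [LinearMap.trace_mul_comm, ← mul_assoc, ← hcommn, mul_assoc]
    rw [t1]
    ring
  exact ⟨key X (lie_self X), key⟩
end
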